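/- arXiv:1011.5722 — 3 statements merged into one kernel-verified Lean document; each statement's English description precedes it below -/
import Mathlib

section
/- Under the exact-power tail condition, (nℓ_x)^{1/ρ_x}(φ(x) − φ̂_1(x)) converges in distribution, as n → ∞, to the Weibull(1, ρ_x) distribution. -/
open MeasureTheory ProbabilityTheory Filter Set Asymptotics Topology

noncomputable section

namespace FrontierEV

variable {Ω : Type*} [MeasureSpace Ω] {p : ℕ}

/-- Joint distribution function `F(x,y) = P(X ≤ x, Y ≤ y)` of the pair `(X 0, Y 0)`
(inequalities on `Fin p → ℝ` are componentwise). -/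
def jointF (X : ℕ → Ω → (Fin p → ℝ)) (Y : ℕ → Ω → ℝ) (x : Fin p → ℝ) (y : ℝ) : ℝ :=
  (ℙ {ω | X 0 ω ≤ x ∧ Y 0 ω ≤ y}).toReal

/-- Marginal distribution function `F_X(x) = P(X ≤ x)`. -/
def margF (X : ℕ → Ω → (Fin p → ℝ)) (x : Fin p → ℝ) : ℝ :=
  (ℙ {ω | X 0 ω ≤ x}).toReal

/-- Conditional distribution function `F(y|x) = F(x,y)/F_X(x)` of `Y` given `X ≤ x`. -/
def condF (X : ℕ → Ω → (Fin p → ℝ)) (Y : ℕ → Ω → ℝ) (x : Fin p → ℝ) (y : ℝ) : ℝ :=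
  jointF X Y x y / margF X x

/-- The frontier function `φ(x) = sup {y ≥ 0 : F(y|x) < 1}`. -/
def phi (X : ℕ → Ω → (Fin p → ℝ)) (Y : ℕ → Ω → ℝ) (x : Fin p → ℝ) : ℝ :=
  sSup {y : ℝ | 0 ≤ y ∧ condF X Y x y < 1}

/-- The conditional quantile `φ_α(x) = inf {y ≥ 0 : F(y|x) ≥ α}`. -/
def condQ (X : ℕ → Ω → (Fin p → ℝ)) (Y : ℕ → Ω → ℝ) (α : ℝ) (x : Fin p → ℝ) : ℝ :=
  sInf {y : ℝ | 0 ≤ y ∧ α ≤ condF X Y x y}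

open Classical in
/-- Empirical joint distribution function. -/
def empJointF (X : ℕ → Ω → (Fin p → ℝ)) (Y : ℕ → Ω → ℝ) (n : ℕ) (x : Fin p → ℝ) (y : ℝ)
    (ω : Ω) : ℝ :=
  (∑ i ∈ Finset.range n, if X i ω ≤ x ∧ Y i ω ≤ y then (1 : ℝ) else 0) / n

open Classical in
/-- Empirical marginal distribution function. -/
def empMargF (X : ℕ → Ω → (Fin p → ℝ)) (n : ℕ) (x : Fin p → ℝ) (ω : Ω) : ℝ :=
  (∑ i ∈ Finset.range n, if X i ω ≤ x then (1 : ℝ) else 0) / n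

/-- Empirical conditional distribution function. -/
def empCondF (X : ℕ → Ω → (Fin p → ℝ)) (Y : ℕ → Ω → ℝ) (n : ℕ) (x : Fin p → ℝ) (y : ℝ)
    (ω : Ω) : ℝ :=
  empJointF X Y n x y ω / empMargF X n x ω

/-- Empirical conditional quantile `φ̂_α(x)`. -/
def empCondQ (X : ℕ → Ω → (Fin p → ℝ)) (Y : ℕ → Ω → ℝ) (n : ℕ) (α : ℝ) (x : Fin p → ℝ)
    (ω : Ω) : ℝ :=
  sInf {y : ℝ | 0 ≤ y ∧ α ≤ empCondF X Y n x y ω}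

/-- The FDH estimator `φ̂_1(x) = max {Y_i : X_i ≤ x, i < n}`. -/
def fdh (X : ℕ → Ω → (Fin p → ℝ)) (Y : ℕ → Ω → ℝ) (n : ℕ) (x : Fin p → ℝ) (ω : Ω) : ℝ :=
  sSup {y : ℝ | ∃ i < n, X i ω ≤ x ∧ Y i ω = y}

/-- The data `(X_i, Y_i)` are i.i.d. copies of `(X 0, Y 0)`. -/
def IID (X : ℕ → Ω → (Fin p → ℝ)) (Y : ℕ → Ω → ℝ) : Prop :=
  (∀ i, Measurable fun ω => (X i ω, Y i ω)) ∧
  iIndepFun (fun i ω => (X i ω, Y i ω)) ℙ ∧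
  ∀ i, IdentDistrib (fun ω => (X i ω, Y i ω)) (fun ω => (X 0 ω, Y 0 ω)) ℙ ℙ

/-- `G` is a distribution function. -/
def IsCDF (G : ℝ → ℝ) : Prop :=
  Monotone G ∧ (∀ y, ContinuousWithinAt G (Ici y) y) ∧
    Tendsto G atBot (𝓝 0) ∧ Tendsto G atTop (𝓝 1)

/-- A distribution function is non-degenerate if it is not the distribution function of a
point mass. -/
def NonDegenerate (G : ℝ → ℝ) : Prop :=
  ∃ y, 0 < G y ∧ G y < 1

/-- Convergence in distribution of real random variables towards the distribution
function `G`: convergence of the distribution functions at every continuity point of `G`. -/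
def TendstoInDist (W : ℕ → Ω → ℝ) (G : ℝ → ℝ) : Prop :=
  ∀ y : ℝ, ContinuousAt G y →
    Tendsto (fun n => (ℙ {ω | W n ω ≤ y}).toReal) atTop (𝓝 (G y))

/-- The extreme-value Weibull distribution function `Ψ_ρ(y) = exp(-(-y)^ρ)` for `y ≤ 0`,
`= 1` for `y > 0`. -/
def PsiEV (ρ y : ℝ) : ℝ :=
  if y ≤ 0 then Real.exp (-((-y) ^ ρ)) else 1

/-- The `Weibull(1,ρ)` distribution function: `W^ρ` is exponential with parameter 1. -/
def weibullCDF (ρ y : ℝ) : ℝ :=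
  if 0 ≤ y then 1 - Real.exp (-(y ^ ρ)) else 0

/-- The distribution function of a centered normal distribution with variance `v`. -/
def normalCDF (v y : ℝ) : ℝ :=
  ((gaussianReal 0 (Real.toNNReal v)) (Iic y)).toReal

/-- Condition (2.2): `1 - F(φ(x) - 1/t | x)` is regularly varying with exponent `-ρ`. -/
def Cond22 (X : ℕ → Ω → (Fin p → ℝ)) (Y : ℕ → Ω → ℝ) (x : Fin p → ℝ) (ρ : ℝ) : Prop :=
  ∀ z > 0, Tendsto
    (fun t => (1 - condF X Y x (phi X Y x - 1 / (t * z))) /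
      (1 - condF X Y x (phi X Y x - 1 / t)))
    atTop (𝓝 (z ^ (-ρ)))

/-- Regular variation at infinity with index `τ`. -/
def RegVary (h : ℝ → ℝ) (τ : ℝ) : Prop :=
  ∀ z > 0, Tendsto (fun t => h (t * z) / h t) atTop (𝓝 (z ^ τ))

/-- Generalized inverse of a function `g : ℝ → ℝ`. -/
def genInv (g : ℝ → ℝ) (y : ℝ) : ℝ :=
  sInf {t : ℝ | y ≤ g t}

/-- Exact-power tail condition:
`F_X(x)[1 - F(y|x)] = ℓ (φ(x) - y)^ρ` for all `y < φ(x)` close enough to `φ(x)`. -/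
def ExactPowerTail (X : ℕ → Ω → (Fin p → ℝ)) (Y : ℕ → Ω → ℝ) (x : Fin p → ℝ)
    (ℓ ρ : ℝ) : Prop :=
  ∃ y₀ < phi X Y x, ∀ y, y₀ ≤ y → y < phi X Y x →
    margF X x * (1 - condF X Y x y) = ℓ * (phi X Y x - y) ^ ρ

/-- The function `U(t) = φ_{1 - 1/(t F_X(x))}(x)`. -/
def Ufun (X : ℕ → Ω → (Fin p → ℝ)) (Y : ℕ → Ω → ℝ) (x : Fin p → ℝ) (t : ℝ) : ℝ :=
  condQ X Y (1 - 1 / (t * margF X x)) x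

/-- The Pickands-type estimator `ρ̂_x` with threshold `k`. -/
def pickands (X : ℕ → Ω → (Fin p → ℝ)) (Y : ℕ → Ω → ℝ) (n k : ℕ) (x : Fin p → ℝ)
    (ω : Ω) : ℝ :=
  Real.log 2 / Real.log
    ((empCondQ X Y n (1 - (2 * (k : ℝ) - 1) / ((n : ℝ) * empMargF X n x ω)) x ω -
        empCondQ X Y n (1 - (4 * (k : ℝ) - 1) / ((n : ℝ) * empMargF X n x ω)) x ω) /
      (empCondQ X Y n (1 - ((k : ℝ) - 1) / ((n : ℝ) * empMargF X n x ω)) x ω -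
        empCondQ X Y n (1 - (2 * (k : ℝ) - 1) / ((n : ℝ) * empMargF X n x ω)) x ω))

/-- The statistic `M^{(j)}_n`. -/
def Mstat (X : ℕ → Ω → (Fin p → ℝ)) (Y : ℕ → Ω → ℝ) (n k j : ℕ) (x : Fin p → ℝ)
    (ω : Ω) : ℝ :=
  (∑ i ∈ Finset.range k,
      (Real.log (empCondQ X Y n (1 - (i : ℝ) / ((n : ℝ) * empMargF X n x ω)) x ω) -
        Real.log (empCondQ X Y n (1 - (k : ℝ) / ((n : ℝ) * empMargF X n x ω)) x ω)) ^ j) / k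

/-- The moment-type estimator `ρ̃_x` with threshold `k`. -/
def momentEst (X : ℕ → Ω → (Fin p → ℝ)) (Y : ℕ → Ω → ℝ) (n k : ℕ) (x : Fin p → ℝ)
    (ω : Ω) : ℝ :=
  -(Mstat X Y n k 1 x ω + 1 -
      (1 / 2) * (1 - (Mstat X Y n k 1 x ω) ^ 2 / Mstat X Y n k 2 x ω)⁻¹)⁻¹



section AuxProofs

set_option linter.unusedSectionVars false

variable [IsProbabilityMeasure (ℙ : Measure Ω)]

lemma measSet_XY {X : ℕ → Ω → (Fin p → ℝ)} {Y : ℕ → Ω → ℝ}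
    (h : ∀ i, Measurable fun ω => (X i ω, Y i ω)) (i : ℕ) (x : Fin p → ℝ) {s : Set ℝ}
    (hs : MeasurableSet s) : MeasurableSet {ω | X i ω ≤ x ∧ Y i ω ∈ s} :=
  (h i) (measurableSet_Iic.prod hs)

lemma prob_gt {X : ℕ → Ω → (Fin p → ℝ)} {Y : ℕ → Ω → ℝ} {x : Fin p → ℝ}
    (hm : ∀ i, Measurable fun ω => (X i ω, Y i ω))
    (hx : 0 < margF X x) {ℓ ρ y₀ : ℝ}
    (ht : ∀ y, y₀ ≤ y → y < phi X Y x →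
      margF X x * (1 - condF X Y x y) = ℓ * (phi X Y x - y) ^ ρ)
    {c : ℝ} (h1 : y₀ ≤ c) (h2 : c < phi X Y x) :
    (ℙ {ω | X 0 ω ≤ x ∧ c < Y 0 ω}).toReal = ℓ * (phi X Y x - c) ^ ρ := by
  have hsub : {ω | X 0 ω ≤ x ∧ Y 0 ω ≤ c} ⊆ {ω | X 0 ω ≤ x} := fun ω h => h.1
  have hmeas : MeasurableSet {ω | X 0 ω ≤ x ∧ Y 0 ω ≤ c} :=
    measSet_XY hm 0 x measurableSet_Iic
  have heq : {ω | X 0 ω ≤ x ∧ c < Y 0 ω} =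
      {ω | X 0 ω ≤ x} \ {ω | X 0 ω ≤ x ∧ Y 0 ω ≤ c} := by
    ext ω
    simp only [mem_setOf_eq, mem_diff, not_and, not_le]
    tauto
  rw [heq, measure_diff hsub hmeas.nullMeasurableSet (measure_ne_top _ _),
      ENNReal.toReal_sub_of_le (measure_mono hsub) (measure_ne_top _ _)]
  have key := ht c h1 h2
  have hm' : margF X x ≠ 0 := ne_of_gt hx
  rw [condF, mul_sub, mul_one, mul_div_cancel₀ _ hm'] at key
  exact key

lemma prob_ge {X : ℕ → Ω → (Fin p → ℝ)} {Y : ℕ → Ω → ℝ} {x : Fin p → ℝ}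
    (hm : ∀ i, Measurable fun ω => (X i ω, Y i ω))
    (hx : 0 < margF X x) {ℓ ρ y₀ : ℝ} (hρ : 0 < ρ)
    (ht : ∀ y, y₀ ≤ y → y < phi X Y x →
      margF X x * (1 - condF X Y x y) = ℓ * (phi X Y x - y) ^ ρ)
    {c : ℝ} (h1 : y₀ < c) (h2 : c ≤ phi X Y x) :
    ℙ {ω | X 0 ω ≤ x ∧ c ≤ Y 0 ω} = ENNReal.ofReal (ℓ * (phi X Y x - c) ^ ρ) := by
  set φ := phi X Y x with hφ
  set ε : ℕ → ℝ := fun n => (c - y₀) / (n + 1) with hε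
  have hεpos : ∀ n, 0 < ε n := fun n => div_pos (by linarith) (by positivity)
  have hεle : ∀ n, ε n ≤ c - y₀ := by
    intro n
    rw [hε]
    apply div_le_of_le_mul₀ (by positivity) (by linarith)
    nlinarith [Nat.cast_nonneg (α := ℝ) n]
  have hε0 : Tendsto ε atTop (𝓝 0) := by
    have := tendsto_one_div_add_atTop_nhds_zero_nat (𝕜 := ℝ)
    have h2' := this.const_mul (c - y₀)
    simp only [mul_zero] at h2'
    refine h2'.congr fun n => ?_
    rw [hε]; ring
  have hanti : Antitone (fun n => {ω | X 0 ω ≤ x ∧ c - ε n < Y 0 ω}) := by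
    intro m n hmn ω hω
    refine ⟨hω.1, lt_of_le_of_lt ?_ hω.2⟩
    have : ε n ≤ ε m := by
      apply div_le_div_of_nonneg_left (by linarith) (by positivity)
      exact_mod_cast by omega
    linarith
  have hiInter : (⋂ n, {ω | X 0 ω ≤ x ∧ c - ε n < Y 0 ω}) =
      {ω | X 0 ω ≤ x ∧ c ≤ Y 0 ω} := by
    ext ω
    simp only [mem_iInter, mem_setOf_eq]
    constructor
    · intro h
      refine ⟨(h 0).1, ?_⟩
      have htend : Tendsto (fun n => c - ε n) atTop (𝓝 c) := by
        simpa using (tendsto_const_nhds (x := c)).sub hε0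
      exact le_of_tendsto htend (Eventually.of_forall fun n => (h n).2.le)
    · intro h n
      exact ⟨h.1, by have := hεpos n; linarith⟩
  have hmn : ∀ n : ℕ, NullMeasurableSet {ω | X 0 ω ≤ x ∧ c - ε n < Y 0 ω} ℙ :=
    fun n => (measSet_XY hm 0 x measurableSet_Ioi).nullMeasurableSet
  have htm := tendsto_measure_iInter_atTop hmn hanti ⟨0, measure_ne_top _ _⟩
  rw [hiInter] at htm
  have hval : ∀ n, ℙ {ω | X 0 ω ≤ x ∧ c - ε n < Y 0 ω} =
      ENNReal.ofReal (ℓ * (φ - c + ε n) ^ ρ) := by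
    intro n
    have h1' : y₀ ≤ c - ε n := by have := hεle n; linarith
    have h2' : c - ε n < φ := by have := hεpos n; linarith
    have := prob_gt hm hx ht h1' h2'
    rw [← ENNReal.ofReal_toReal (measure_ne_top ℙ {ω | X 0 ω ≤ x ∧ c - ε n < Y 0 ω}), this]
    congr 1
    rw [← hφ]; ring
  have htm2 : Tendsto (fun n => ℙ {ω | X 0 ω ≤ x ∧ c - ε n < Y 0 ω}) atTop
      (𝓝 (ENNReal.ofReal (ℓ * (φ - c) ^ ρ))) := by
    have hb : Tendsto (fun n => φ - c + ε n) atTop (𝓝 (φ - c)) := by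
      simpa using (tendsto_const_nhds (x := φ - c)).add hε0
    have hc : ContinuousAt (fun t : ℝ => t ^ ρ) (φ - c) :=
      Real.continuousAt_rpow_const _ _ (Or.inr hρ.le)
    have h3 : Tendsto (fun n => ℓ * (φ - c + ε n) ^ ρ) atTop (𝓝 (ℓ * (φ - c) ^ ρ)) :=
      tendsto_const_nhds.mul (hc.tendsto.comp hb)
    have h4 := (ENNReal.continuous_ofReal.tendsto _).comp h3
    refine h4.congr fun n => ?_
    exact (hval n).symm
  exact tendsto_nhds_unique htm htm2

lemma prob_none {X : ℕ → Ω → (Fin p → ℝ)} {Y : ℕ → Ω → ℝ}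
    (hind : iIndepFun (fun i ω => (X i ω, Y i ω)) ℙ)
    (hid : ∀ i, IdentDistrib (fun ω => (X i ω, Y i ω)) (fun ω => (X 0 ω, Y 0 ω)) ℙ ℙ)
    (hm : ∀ i, Measurable fun ω => (X i ω, Y i ω))
    (x : Fin p → ℝ) (c : ℝ) (n : ℕ) :
    ℙ {ω | ∀ i < n, ¬(X i ω ≤ x ∧ c ≤ Y i ω)} =
      (1 - ℙ {ω | X 0 ω ≤ x ∧ c ≤ Y 0 ω}) ^ n := by
  classical
  set B : Set ((Fin p → ℝ) × ℝ) := (Iic x ×ˢ Ici c)ᶜ with hB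
  have hBm : MeasurableSet B := (measurableSet_Iic.prod measurableSet_Ici).compl
  have heq : {ω | ∀ i < n, ¬(X i ω ≤ x ∧ c ≤ Y i ω)} =
      ⋂ i ∈ Finset.range n, (fun ω => (X i ω, Y i ω)) ⁻¹' B := by
    ext ω
    simp [hB, Set.mem_prod]
  rw [heq,
    hind.measure_inter_preimage_eq_mul (Finset.range n) (sets := fun _ => B) (fun i _ => hBm)]
  have hident : ∀ i, ℙ ((fun ω => (X i ω, Y i ω)) ⁻¹' B) =
      ℙ ((fun ω => (X 0 ω, Y 0 ω)) ⁻¹' B) := fun i => (hid i).measure_mem_eq hBm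
  rw [Finset.prod_congr rfl fun i _ => hident i, Finset.prod_const, Finset.card_range]
  congr 1
  have h2 : (fun ω => (X 0 ω, Y 0 ω)) ⁻¹' B = {ω | X 0 ω ≤ x ∧ c ≤ Y 0 ω}ᶜ := by
    ext ω; simp [hB, Set.mem_prod]
  rw [h2, prob_compl_eq_one_sub
    (show MeasurableSet {ω | X 0 ω ≤ x ∧ c ≤ Y 0 ω} from
      (hm 0) (measurableSet_Iic.prod measurableSet_Ici))]

lemma fdh_ge_iff (X : ℕ → Ω → (Fin p → ℝ)) (Y : ℕ → Ω → ℝ) (n : ℕ) (x : Fin p → ℝ)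
    (ω : Ω) {c : ℝ} (hc : 0 < c) :
    c ≤ fdh X Y n x ω ↔ ∃ i < n, X i ω ≤ x ∧ c ≤ Y i ω := by
  rw [fdh]
  set S := {y : ℝ | ∃ i < n, X i ω ≤ x ∧ Y i ω = y} with hS
  have hfin : S.Finite := by
    apply ((Set.finite_Iio n).image fun i => Y i ω).subset
    rintro y ⟨i, hi, _, hy⟩
    exact ⟨i, hi, hy⟩
  constructor
  · intro h
    rcases S.eq_empty_or_nonempty with hSe | hSe
    · rw [hSe, Real.sSup_empty] at h; linarith
    · obtain ⟨i, hi, hxi, hyi⟩ := hSe.csSup_mem hfin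
      exact ⟨i, hi, hxi, hyi ▸ h⟩
  · rintro ⟨i, hi, hxi, hyi⟩
    exact hyi.trans (le_csSup hfin.bddAbove ⟨i, hi, hxi, rfl⟩)

lemma phi_pos {X : ℕ → Ω → (Fin p → ℝ)} {Y : ℕ → Ω → ℝ} {x : Fin p → ℝ}
    (hx : 0 < margF X x)
    (hpos : ∀ᵐ ω ∂(ℙ : Measure Ω), (∀ i, 0 ≤ X 0 ω i) ∧ 0 ≤ Y 0 ω)
    {ℓ ρ y₀ : ℝ} (hℓ : 0 < ℓ) (hρ : 0 < ρ) (hy₀ : y₀ < phi X Y x)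
    (ht : ∀ y, y₀ ≤ y → y < phi X Y x →
      margF X x * (1 - condF X Y x y) = ℓ * (phi X Y x - y) ^ ρ) :
    0 < phi X Y x := by
  by_contra hφ
  push_neg at hφ
  set φ := phi X Y x with hφdef
  set c₁ := max y₀ (φ - 1) with hc₁def
  set c₂ := (c₁ + φ) / 2 with hc₂def
  have hc₁ : c₁ < φ := max_lt hy₀ (by linarith)
  have hc₂1 : c₁ < c₂ := by rw [hc₂def]; linarith
  have hc₂2 : c₂ < φ := by rw [hc₂def]; linarith
  have hjoint : ∀ c, c < φ → jointF X Y x c = 0 := by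
    intro c hc
    have hnull : (ℙ : Measure Ω) {ω | Y 0 ω ≤ c} = 0 := by
      have hsub : {ω | Y 0 ω ≤ c} ⊆ {ω | ¬((∀ i, 0 ≤ X 0 ω i) ∧ 0 ≤ Y 0 ω)} := by
        intro ω h hmem
        have h2 := hmem.2
        simp only [mem_setOf_eq] at h
        have : c < 0 := lt_of_lt_of_le hc hφ
        linarith
      exact measure_mono_null hsub (by simpa [ae_iff] using hpos)
    have : (ℙ : Measure Ω) {ω | X 0 ω ≤ x ∧ Y 0 ω ≤ c} = 0 :=
      measure_mono_null (fun ω h => h.2) hnull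
    simp [jointF, this]
  have e₁ := ht c₁ (le_max_left _ _) hc₁
  have e₂ := ht c₂ (le_trans (le_max_left _ _) hc₂1.le) hc₂2
  rw [condF, hjoint c₁ hc₁, zero_div, sub_zero, mul_one] at e₁
  rw [condF, hjoint c₂ hc₂2, zero_div, sub_zero, mul_one] at e₂
  have hlt : (φ - c₂) ^ ρ < (φ - c₁) ^ ρ :=
    Real.rpow_lt_rpow (by linarith) (by linarith) hρ
  nlinarith

end AuxProofs

/-- Corollary 2.1: under the exact-power tail condition,
`(nℓ_x)^{1/ρ_x} (φ(x) - φ̂_1(x))` converges in distribution to `Weibull(1, ρ_x)`. -/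
theorem statement3
    [IsProbabilityMeasure (ℙ : Measure Ω)]
    (X : ℕ → Ω → (Fin p → ℝ)) (Y : ℕ → Ω → ℝ) (hiid : IID X Y)
    (hpos : ∀ᵐ ω ∂ℙ, (∀ i, 0 ≤ X 0 ω i) ∧ 0 ≤ Y 0 ω)
    (x : Fin p → ℝ) (hxpos : ∀ i, 0 ≤ x i) (hx : 0 < margF X x)
    (hphi : BddAbove {y : ℝ | 0 ≤ y ∧ condF X Y x y < 1})
    (ℓ ρ : ℝ) (hℓ : 0 < ℓ) (hρ : 0 < ρ) (htail : ExactPowerTail X Y x ℓ ρ) :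
    TendstoInDist (fun n ω => ((n : ℝ) * ℓ) ^ (1 / ρ) * (phi X Y x - fdh X Y n x ω))
      (weibullCDF ρ) := by
  obtain ⟨hm, hind, hid⟩ := hiid
  obtain ⟨y₀, hy₀, ht⟩ := htail
  have hφpos : 0 < phi X Y x := phi_pos hx hpos hℓ hρ hy₀ ht
  intro y _hy
  rcases le_or_gt y 0 with hy0 | hy0
  · -- case y ≤ 0 : the probability is eventually 0
    have hval : weibullCDF ρ y = 0 := by
      rcases lt_or_eq_of_le hy0 with h | h
      · rw [weibullCDF, if_neg (by linarith)]
      · subst h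
        rw [weibullCDF, if_pos le_rfl, Real.zero_rpow hρ.ne', neg_zero, Real.exp_zero, sub_self]
    rw [hval]
    have hzero : ∀ n : ℕ, 1 ≤ n →
        (ℙ {ω | ((n : ℝ) * ℓ) ^ (1 / ρ) * (phi X Y x - fdh X Y n x ω) ≤ y}).toReal = 0 := by
      intro n hn
      have hn1 : (1 : ℝ) ≤ (n : ℝ) := by exact_mod_cast hn
      have han : 0 < ((n : ℝ) * ℓ) ^ (1 / ρ) :=
        Real.rpow_pos_of_pos (by nlinarith) _
      have hz0 : ℙ {ω | X 0 ω ≤ x ∧ phi X Y x ≤ Y 0 ω} = 0 := by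
        rw [prob_ge hm hx hρ ht hy₀ le_rfl, sub_self, Real.zero_rpow hρ.ne', mul_zero,
          ENNReal.ofReal_zero]
      have hsub : {ω | ((n : ℝ) * ℓ) ^ (1 / ρ) * (phi X Y x - fdh X Y n x ω) ≤ y} ⊆
          ⋃ i ∈ Set.Iio n, {ω | X i ω ≤ x ∧ phi X Y x ≤ Y i ω} := by
        intro ω hω
        simp only [mem_setOf_eq] at hω
        have h1 : phi X Y x ≤ fdh X Y n x ω := by nlinarith
        obtain ⟨i, hi, hxi, hyi⟩ := (fdh_ge_iff X Y n x ω hφpos).mp h1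
        exact Set.mem_biUnion (show i ∈ Set.Iio n from hi) ⟨hxi, hyi⟩
      have hz : ℙ (⋃ i ∈ Set.Iio n, {ω | X i ω ≤ x ∧ phi X Y x ≤ Y i ω}) = 0 := by
        refine (measure_biUnion_null_iff (Set.to_countable _)).mpr fun i _ => ?_
        have := (hid i).measure_mem_eq
          (show MeasurableSet (Iic x ×ˢ Ici (phi X Y x)) from
            measurableSet_Iic.prod measurableSet_Ici)
        exact this.trans hz0
      rw [measure_mono_null hsub hz]
      simp
    refine tendsto_const_nhds.congr' ?_
    filter_upwards [eventually_ge_atTop 1] with n hn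
    exact (hzero n hn).symm
  · -- case y > 0
    have hvw : weibullCDF ρ y = 1 - Real.exp (-(y ^ ρ)) := if_pos hy0.le
    rw [hvw]
    have hatop : Tendsto (fun n : ℕ => ((n : ℝ) * ℓ) ^ (1 / ρ)) atTop atTop := by
      apply (tendsto_rpow_atTop (by positivity : (0 : ℝ) < 1 / ρ)).comp
      exact Tendsto.atTop_mul_const hℓ tendsto_natCast_atTop_atTop
    have hdiv : Tendsto (fun n : ℕ => y / ((n : ℝ) * ℓ) ^ (1 / ρ)) atTop (𝓝 0) :=
      Tendsto.div_atTop tendsto_const_nhds hatop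
    have hgap : 0 < phi X Y x - max y₀ 0 := sub_pos.mpr (max_lt hy₀ hφpos)
    have hev : ∀ᶠ n : ℕ in atTop,
        (ℙ {ω | ((n : ℝ) * ℓ) ^ (1 / ρ) * (phi X Y x - fdh X Y n x ω) ≤ y}).toReal =
          1 - (1 - y ^ ρ / (n : ℝ)) ^ n := by
      filter_upwards [eventually_ge_atTop 1, hdiv.eventually (gt_mem_nhds hgap)] with n hn1 hn2
      set a := ((n : ℝ) * ℓ) ^ (1 / ρ) with ha
      have hnpos : (0 : ℝ) < n := by exact_mod_cast hn1
      have hapos : 0 < a := Real.rpow_pos_of_pos (by positivity) _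
      set c := phi X Y x - y / a with hc
      have hmax1 := le_max_left y₀ (0 : ℝ)
      have hmax2 := le_max_right y₀ (0 : ℝ)
      have hc0 : 0 < c := by rw [hc]; linarith
      have hcy₀ : y₀ < c := by rw [hc]; linarith
      have hcφ : c < phi X Y x := by
        have : 0 < y / a := div_pos hy0 hapos
        rw [hc]; linarith
      have hya : a * (y / a) = y := mul_div_cancel₀ y hapos.ne'
      have hU : {ω | a * (phi X Y x - fdh X Y n x ω) ≤ y} =
          ⋃ i ∈ Set.Iio n, {ω | X i ω ≤ x ∧ c ≤ Y i ω} := by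
        ext ω
        simp only [mem_setOf_eq, Set.mem_iUnion, Set.mem_Iio, exists_prop]
        rw [show (∃ i, i < n ∧ X i ω ≤ x ∧ c ≤ Y i ω) ↔ ∃ i < n, X i ω ≤ x ∧ c ≤ Y i ω by
          simp, ← fdh_ge_iff X Y n x ω hc0]
        constructor
        · intro h
          rw [hc]
          nlinarith
        · intro h
          rw [hc] at h
          nlinarith
      have hp : ℙ {ω | X 0 ω ≤ x ∧ c ≤ Y 0 ω} = ENNReal.ofReal (y ^ ρ / (n : ℝ)) := by
        rw [prob_ge hm hx hρ ht hcy₀ hcφ.le]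
        congr 1
        have h1 : phi X Y x - c = y / a := by rw [hc]; ring
        have h2 : a ^ ρ = (n : ℝ) * ℓ := by
          rw [ha, ← Real.rpow_mul (by positivity), one_div, inv_mul_cancel₀ hρ.ne',
            Real.rpow_one]
        rw [h1, Real.div_rpow hy0.le hapos.le, h2]
        field_simp
      have ht1 : y ^ ρ / (n : ℝ) ≤ 1 := by
        have hle := prob_le_one (μ := (ℙ : Measure Ω)) (s := {ω | X 0 ω ≤ x ∧ c ≤ Y 0 ω})
        rw [hp] at hle
        exact ENNReal.ofReal_le_one.mp hle
      have ht0 : 0 ≤ y ^ ρ / (n : ℝ) := by positivity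
      have hUm : MeasurableSet (⋃ i ∈ Set.Iio n, {ω | X i ω ≤ x ∧ c ≤ Y i ω}) :=
        MeasurableSet.biUnion (Set.to_countable _) fun i _ =>
          measSet_XY hm i x measurableSet_Ici
      have hcompl : (⋃ i ∈ Set.Iio n, {ω | X i ω ≤ x ∧ c ≤ Y i ω})ᶜ =
          {ω | ∀ i < n, ¬(X i ω ≤ x ∧ c ≤ Y i ω)} := by
        ext ω; simp
      have hPU : ℙ {ω | a * (phi X Y x - fdh X Y n x ω) ≤ y} =
          1 - (1 - ENNReal.ofReal (y ^ ρ / (n : ℝ))) ^ n := by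
        rw [hU, ← ENNReal.sub_sub_cancel ENNReal.one_ne_top (prob_le_one),
          ← prob_compl_eq_one_sub hUm, hcompl, prob_none hind hid hm x c n, hp]
      have hq1 : ENNReal.ofReal (y ^ ρ / (n : ℝ)) ≤ 1 := ENNReal.ofReal_le_one.mpr ht1
      have hpow1 : (1 - ENNReal.ofReal (y ^ ρ / (n : ℝ))) ^ n ≤ 1 :=
        pow_le_one' tsub_le_self n
      rw [hPU, ENNReal.toReal_sub_of_le hpow1 ENNReal.one_ne_top, ENNReal.toReal_one,
        ENNReal.toReal_pow, ENNReal.toReal_sub_of_le hq1 ENNReal.one_ne_top,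
        ENNReal.toReal_one, ENNReal.toReal_ofReal ht0]
    have hlim : Tendsto (fun n : ℕ => 1 - (1 - y ^ ρ / (n : ℝ)) ^ n) atTop
        (𝓝 (1 - Real.exp (-(y ^ ρ)))) := by
      have h1 := Real.tendsto_one_add_div_pow_exp (-(y ^ ρ))
      have h2 := (tendsto_const_nhds (x := (1 : ℝ))).sub h1
      have e : ∀ n : ℕ, (1 : ℝ) + -(y ^ ρ) / n = 1 - y ^ ρ / n := fun n => by ring
      refine h2.congr fun n => ?_
      rw [e n]
    exact hlim.congr' (hev.mono fun n h => h.symm)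

end FrontierEV
end
end

section
/- If there exist norming constants b_n > 0 and a non-degenerate distribution function G_x such that b_n^{-1}(φ̂_1(x) − φ(x)) converges in distribution to G_x, then for any fixed integer k ≥ 0, b_n^{-1}(φ̂_{1−k/(nF̂_X(x))}(x) − φ(x)) converges in distribution, as n → ∞, to the distribution function H_x(y) = G_x(y) Σ_{i=0}^k (−log G_x(y))^i / i!. -/
open MeasureTheory ProbabilityTheory Filter Set Asymptotics Topology

noncomputable section

namespace FrontierEV

variable {Ω : Type*} [MeasureSpace Ω] {p : ℕ}

section Aux


example (n : ℕ) : Tendsto (fun x : ℝ => x ^ n * Real.exp (-x)) atTop (𝓝 0) :=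
  Real.tendsto_pow_mul_exp_neg_atTop_nhds_zero n
example (n k : ℕ) : n.descFactorial k = k.factorial * n.choose k :=
  Nat.descFactorial_eq_factorial_mul_choose n k

lemma np_tendsto {g : ℝ} (hg : 0 < g) {q : ℕ → ℝ} (hq0 : ∀ n, 0 ≤ q n) (hq1 : ∀ n, q n ≤ 1)
    (h : Tendsto (fun n => (1 - q n) ^ n) atTop (𝓝 g)) :
    Tendsto q atTop (𝓝 0) ∧
      Tendsto (fun n : ℕ => (n : ℝ) * q n) atTop (𝓝 (-Real.log g)) := by
  have hev : ∀ᶠ n : ℕ in atTop, g / 2 < (1 - q n) ^ n ∧ 1 ≤ n := by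
    filter_upwards [h.eventually (eventually_gt_nhds (by linarith : g / 2 < g)),
      eventually_ge_atTop 1] with n h1 h2 using ⟨h1, h2⟩
  -- 1 - q n > 0 eventually
  have hpos : ∀ᶠ n : ℕ in atTop, 0 < 1 - q n := by
    filter_upwards [hev] with n ⟨h1, h2⟩
    rcases lt_or_eq_of_le (by linarith [hq1 n] : (0:ℝ) ≤ 1 - q n) with h' | h'
    · exact h'
    · exfalso
      rw [← h', zero_pow (by omega)] at h1
      linarith
  -- q → 0
  have hq_lim : Tendsto q atTop (𝓝 0) := by
    have hup : ∀ᶠ n : ℕ in atTop, q n ≤ 1 - Real.exp (Real.log (g / 2) * (1 / (n : ℝ))) := by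
      filter_upwards [hev, hpos] with n ⟨h1, h2⟩ h3
      have hn : (0:ℝ) < n := by exact_mod_cast h2
      have hlog : Real.log (g / 2) < (n : ℝ) * Real.log (1 - q n) := by
        have := Real.log_lt_log (by positivity) h1
        rwa [Real.log_pow] at this
      have : Real.log (g / 2) * (1 / (n : ℝ)) < Real.log (1 - q n) := by
        rw [mul_one_div, div_lt_iff₀ hn]
        linarith [hlog]
      have := Real.exp_lt_exp.2 this
      rw [Real.exp_log h3] at this
      linarith
    have hlim : Tendsto (fun n : ℕ => 1 - Real.exp (Real.log (g / 2) * (1 / (n : ℝ))))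
        atTop (𝓝 0) := by
      have h1 : Tendsto (fun n : ℕ => Real.log (g / 2) * (1 / (n : ℝ))) atTop (𝓝 0) := by
        simpa using tendsto_one_div_atTop_nhds_zero_nat.const_mul (Real.log (g / 2))
      have := (Real.continuous_exp.tendsto 0).comp h1
      simpa using (tendsto_const_nhds (x := (1:ℝ))).sub this
    exact tendsto_of_tendsto_of_tendsto_of_le_of_le' tendsto_const_nhds hlim
      (Eventually.of_forall hq0) hup
  refine ⟨hq_lim, ?_⟩
  -- n log(1 - q n) → log g
  have hlog : Tendsto (fun n : ℕ => (n : ℝ) * Real.log (1 - q n)) atTop (𝓝 (Real.log g)) := by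
    have := (Real.continuousAt_log hg.ne').tendsto.comp h
    apply this.congr
    intro n
    simp [Real.log_pow]
  -- squeeze
  have hub : ∀ᶠ n : ℕ in atTop, (n : ℝ) * q n ≤ -((n : ℝ) * Real.log (1 - q n)) := by
    filter_upwards [hpos] with n h3
    have := Real.log_le_sub_one_of_pos h3
    nlinarith [Nat.cast_nonneg (α := ℝ) n]
  have hlb : ∀ᶠ n : ℕ in atTop,
      -((n : ℝ) * Real.log (1 - q n)) * (1 - q n) ≤ (n : ℝ) * q n := by
    filter_upwards [hpos] with n h3
    have h4 : Real.log (1 - q n)⁻¹ ≤ (1 - q n)⁻¹ - 1 := Real.log_le_sub_one_of_pos (by positivity)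
    rw [Real.log_inv] at h4
    have h5 : -Real.log (1 - q n) * (1 - q n) ≤ q n := by
      have := mul_le_mul_of_nonneg_right h4 h3.le
      calc -Real.log (1 - q n) * (1 - q n) ≤ ((1 - q n)⁻¹ - 1) * (1 - q n) := this
        _ = q n := by field_simp; ring
    nlinarith [Nat.cast_nonneg (α := ℝ) n]
  have hub' : Tendsto (fun n : ℕ => -((n : ℝ) * Real.log (1 - q n))) atTop (𝓝 (-Real.log g)) :=
    hlog.neg
  have hlb' : Tendsto (fun n : ℕ => -((n : ℝ) * Real.log (1 - q n)) * (1 - q n)) atTop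
      (𝓝 (-Real.log g)) := by
    have := hub'.mul ((tendsto_const_nhds (x := (1:ℝ))).sub hq_lim)
    simpa using this
  exact tendsto_of_tendsto_of_tendsto_of_le_of_le' hlb' hub' hlb hub

lemma binsum_tendsto_pos (k : ℕ) {g : ℝ} (hg : 0 < g) {q : ℕ → ℝ} (hq0 : ∀ n, 0 ≤ q n)
    (hq1 : ∀ n, q n ≤ 1)
    (h : Tendsto (fun n => (1 - q n) ^ n) atTop (𝓝 g)) :
    Tendsto (fun n : ℕ => ∑ j ∈ Finset.range (k + 1),
        (n.choose j : ℝ) * q n ^ j * (1 - q n) ^ (n - j)) atTop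
      (𝓝 (g * ∑ i ∈ Finset.range (k + 1), (-Real.log g) ^ i / (i.factorial : ℝ))) := by
  obtain ⟨hq_lim, hnq⟩ := np_tendsto hg hq0 hq1 h
  set L := -Real.log g with hL
  rw [Finset.mul_sum]
  refine tendsto_finset_sum _ fun j hj => ?_
  -- each term tends to g * L^j / j!
  have hterm : ∀ᶠ n : ℕ in atTop, (n.choose j : ℝ) * q n ^ j * (1 - q n) ^ (n - j) =
      ((∏ i ∈ Finset.range j, (((n : ℝ) - i) * q n)) / (j.factorial : ℝ)) *
        ((1 - q n) ^ n / (1 - q n) ^ j) := by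
    filter_upwards [eventually_ge_atTop j, hq_lim.eventually
      (eventually_lt_nhds (by norm_num : (0:ℝ) < 1/2))] with n hnj hqn
    have hq_lt : q n < 1 := by have := hq0 n; linarith
    have h1q : (0:ℝ) < 1 - q n := by linarith
    have hchoose : (n.choose j : ℝ) = (∏ i ∈ Finset.range j, ((n : ℝ) - i)) / (j.factorial : ℝ) := by
      have := Nat.descFactorial_eq_factorial_mul_choose n j
      have hprod : (n.descFactorial j : ℝ) = ∏ i ∈ Finset.range j, ((n : ℝ) - i) := by
        rw [Nat.descFactorial_eq_prod_range, Nat.cast_prod]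
        refine Finset.prod_congr rfl fun i hi => ?_
        have : i ≤ n := le_trans (Finset.mem_range.1 hi).le hnj
        push_cast [Nat.cast_sub this]
        ring
      rw [← hprod, this]
      push_cast
      field_simp
    have hpow : (1 - q n) ^ (n - j) = (1 - q n) ^ n / (1 - q n) ^ j := by
      rw [eq_div_iff (by positivity), ← pow_add]
      congr 1
      omega
    rw [hchoose, hpow, Finset.prod_mul_distrib, Finset.prod_const, Finset.card_range]
    ring
  rw [show g * ((-Real.log g) ^ j / (j.factorial : ℝ)) =
      ((L ^ j) / (j.factorial : ℝ)) * (g / 1) by rw [hL]; ring]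
  refine Tendsto.congr' (hterm.mono fun n hn => hn.symm) (Tendsto.mul ?_ ?_)
  · apply Tendsto.div_const
    have : Tendsto (fun n : ℕ => ∏ i ∈ Finset.range j, (((n : ℝ) - i) * q n)) atTop
        (𝓝 (∏ _i ∈ Finset.range j, L)) := by
      refine tendsto_finset_prod _ fun i _ => ?_
      have : Tendsto (fun n : ℕ => (n : ℝ) * q n - i * q n) atTop (𝓝 (L - i * 0)) :=
        hnq.sub (hq_lim.const_mul _)
      simpa using this.congr fun n => by ring
    simpa [Finset.prod_const] using this
  · refine Tendsto.div h ?_ one_ne_zero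
    have : Tendsto (fun n : ℕ => (1 - q n) ^ j) atTop (𝓝 ((1 - 0) ^ j)) :=
      ((tendsto_const_nhds (x := (1:ℝ))).sub hq_lim).pow j
    simpa using this

lemma binsum_tendsto_zero (k : ℕ) {q : ℕ → ℝ} (hq0 : ∀ n, 0 ≤ q n) (hq1 : ∀ n, q n ≤ 1)
    (h : Tendsto (fun n => (1 - q n) ^ n) atTop (𝓝 0)) :
    Tendsto (fun n : ℕ => ∑ j ∈ Finset.range (k + 1),
        (n.choose j : ℝ) * q n ^ j * (1 - q n) ^ (n - j)) atTop (𝓝 0) := by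
  -- n * q n → ∞
  have hnq : Tendsto (fun n : ℕ => (n : ℝ) * q n) atTop atTop := by
    rw [tendsto_atTop]
    intro C
    have h1 : ∀ᶠ n : ℕ in atTop, (C : ℝ) ≤ (n : ℝ) / 2 := by
      filter_upwards [eventually_ge_atTop (Nat.ceil (2 * |C|) + 1)] with n hn
      have : (2 * |C| : ℝ) ≤ n := le_trans (Nat.le_ceil _)
        (by exact_mod_cast le_trans (Nat.le_succ _) hn)
      cases' abs_cases C with h h <;> nlinarith
    have h2 : ∀ᶠ n : ℕ in atTop, (1 - q n) ^ n < Real.exp (-(2 * C)) :=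
      h.eventually (eventually_lt_nhds (Real.exp_pos _))
    filter_upwards [h1, h2] with n hn1 hn2
    rcases le_or_gt (q n) (1/2) with hq | hq
    · -- 1 - q n ≥ 1/2 : use log bound
      have h1q : (0:ℝ) < 1 - q n := by linarith
      have hlog : -Real.log (1 - q n) ≤ 2 * q n := by
        have h4 : Real.log (1 - q n)⁻¹ ≤ (1 - q n)⁻¹ - 1 :=
          Real.log_le_sub_one_of_pos (by positivity)
        rw [Real.log_inv] at h4
        have : (1 - q n)⁻¹ - 1 = q n / (1 - q n) := by field_simp; ring
        rw [this] at h4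
        have : q n / (1 - q n) ≤ 2 * q n := by
          rw [div_le_iff₀ h1q]
          nlinarith [hq0 n]
        linarith
      have hexp : Real.exp (-(2 * ((n:ℝ) * q n))) ≤ (1 - q n) ^ n := by
        rw [← Real.exp_log (show (0:ℝ) < (1 - q n)^n by positivity), Real.exp_le_exp,
          Real.log_pow]
        nlinarith [Nat.cast_nonneg (α := ℝ) n, hlog]
      have := lt_of_le_of_lt hexp hn2
      rw [Real.exp_lt_exp] at this
      linarith
    · -- q n > 1/2
      calc C ≤ (n:ℝ)/2 := hn1
        _ ≤ (n:ℝ) * q n := by nlinarith [Nat.cast_nonneg (α := ℝ) n]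
  -- bound
  have hbound : ∀ᶠ n : ℕ in atTop, ∑ j ∈ Finset.range (k + 1),
      (n.choose j : ℝ) * q n ^ j * (1 - q n) ^ (n - j) ≤
      (k + 1 : ℝ) * (1 + ((n:ℝ) * q n) ^ k) * Real.exp (-(((n:ℝ) * q n) / 2)) := by
    filter_upwards [eventually_ge_atTop (2 * k + 1)] with n hn
    set t := (n : ℝ) * q n with ht
    have ht0 : 0 ≤ t := mul_nonneg (Nat.cast_nonneg n) (hq0 n)
    have hterm : ∀ j ∈ Finset.range (k + 1),
        (n.choose j : ℝ) * q n ^ j * (1 - q n) ^ (n - j) ≤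
        (1 + t ^ k) * Real.exp (-(t / 2)) := by
      intro j hj
      have hjk : j ≤ k := Nat.lt_succ_iff.1 (Finset.mem_range.1 hj)
      have h1 : (n.choose j : ℝ) * q n ^ j ≤ t ^ j := by
        have hc : (n.choose j : ℝ) ≤ (n : ℝ) ^ j := by
          exact_mod_cast Nat.choose_le_pow n j
        calc (n.choose j : ℝ) * q n ^ j ≤ (n:ℝ)^j * q n ^ j :=
              mul_le_mul_of_nonneg_right hc (pow_nonneg (hq0 n) j)
          _ = t ^ j := by rw [ht, mul_pow]
      have h2 : t ^ j ≤ 1 + t ^ k := by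
        rcases le_or_gt t 1 with h' | h'
        · have : t ^ j ≤ 1 := pow_le_one₀ ht0 h'
          nlinarith [pow_nonneg ht0 k]
        · have : t ^ j ≤ t ^ k := pow_le_pow_right₀ h'.le hjk
          nlinarith
      have ha : (0:ℝ) ≤ 1 - q n := by linarith [hq1 n]
      have h3 : (1 - q n) ^ (n - j) ≤ Real.exp (-(t / 2)) := by
        have hb : (1 - q n) ^ (n - j) ≤ (1 - q n) ^ (n - k) :=
          pow_le_pow_of_le_one ha (by linarith [hq0 n]) (by omega)
        have hc : (1 - q n) ^ (n - k) ≤ Real.exp (-(q n)) ^ (n - k) := by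
          apply pow_le_pow_left₀ ha
          nlinarith [Real.add_one_le_exp (-(q n))]
        have hd : Real.exp (-(q n)) ^ (n - k) = Real.exp (-(q n * (n - k : ℕ))) := by
          rw [← Real.exp_nat_mul]
          ring_nf
        have he : t / 2 ≤ q n * ((n - k : ℕ) : ℝ) := by
          have hcast : ((n - k : ℕ) : ℝ) = (n : ℝ) - k := by
            rw [Nat.cast_sub (by omega)]
          rw [hcast, ht]
          have hn2 : 2 * (k:ℝ) ≤ n := by exact_mod_cast (by omega : 2 * k ≤ n)
          nlinarith [hq0 n]
        calc (1 - q n) ^ (n - j) ≤ Real.exp (-(q n)) ^ (n - k) := le_trans hb hc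
          _ = Real.exp (-(q n * (n - k : ℕ))) := hd
          _ ≤ Real.exp (-(t / 2)) := by rw [Real.exp_le_exp]; linarith
      have hnn : (0:ℝ) ≤ (n.choose j : ℝ) * q n ^ j :=
        mul_nonneg (Nat.cast_nonneg _) (pow_nonneg (hq0 n) j)
      calc (n.choose j : ℝ) * q n ^ j * (1 - q n) ^ (n - j)
          ≤ t ^ j * Real.exp (-(t / 2)) := by
            apply mul_le_mul (le_trans h1 (le_refl _)) h3 (pow_nonneg ha _)
              (pow_nonneg ht0 j)
        _ ≤ (1 + t ^ k) * Real.exp (-(t / 2)) := by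
            apply mul_le_mul_of_nonneg_right h2 (Real.exp_pos _).le
    calc ∑ j ∈ Finset.range (k + 1), (n.choose j : ℝ) * q n ^ j * (1 - q n) ^ (n - j)
        ≤ ∑ _j ∈ Finset.range (k + 1), (1 + t ^ k) * Real.exp (-(t / 2)) :=
          Finset.sum_le_sum hterm
      _ = (k + 1 : ℝ) * (1 + t ^ k) * Real.exp (-(t / 2)) := by
          rw [Finset.sum_const, Finset.card_range]
          push_cast
          ring
  have hdiv : Tendsto (fun t : ℝ => t / 2) atTop atTop :=
    tendsto_id.atTop_div_const (by norm_num)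
  have hB : Tendsto (fun t : ℝ => (k + 1 : ℝ) * (1 + t ^ k) * Real.exp (-(t / 2))) atTop
      (𝓝 0) := by
    have h0 : Tendsto (fun t : ℝ => Real.exp (-(t / 2))) atTop (𝓝 0) :=
      Real.tendsto_exp_atBot.comp (tendsto_neg_atTop_atBot.comp hdiv)
    have h1 : Tendsto (fun t : ℝ => t ^ k * Real.exp (-(t / 2))) atTop (𝓝 0) := by
      have h2 := (Real.tendsto_pow_mul_exp_neg_atTop_nhds_zero k).comp hdiv
      have h3 : Tendsto (fun t : ℝ => (2:ℝ) ^ k * ((t / 2) ^ k * Real.exp (-(t / 2)))) atTop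
          (𝓝 0) := by simpa using (h2.const_mul ((2:ℝ) ^ k))
      refine h3.congr fun t => ?_
      rw [div_pow]
      field_simp
    have h4 := (h0.add h1).const_mul ((k:ℝ) + 1)
    simp only [add_zero, mul_zero] at h4
    refine h4.congr fun t => by ring
  have := hB.comp hnq
  have hconc : Tendsto (fun n : ℕ => (k + 1 : ℝ) * (1 + ((n:ℝ) * q n) ^ k) *
      Real.exp (-(((n:ℝ) * q n) / 2))) atTop (𝓝 0) := this
  refine tendsto_of_tendsto_of_tendsto_of_le_of_le' tendsto_const_nhds hconc ?_ hbound
  filter_upwards with n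
  apply Finset.sum_nonneg
  intro j hj
  exact mul_nonneg (mul_nonneg (Nat.cast_nonneg _) (pow_nonneg (hq0 n) _))
    (pow_nonneg (by linarith [hq1 n]) _)

noncomputable def hfun (k : ℕ) (g : ℝ) : ℝ :=
  g * ∑ i ∈ Finset.range (k + 1), (-Real.log g) ^ i / (i.factorial : ℝ)

lemma hfun_zero (k : ℕ) : hfun k 0 = 0 := by simp [hfun]

lemma hfun_pos (k : ℕ) {g : ℝ} (hg : 0 < g) (hg1 : g ≤ 1) : 0 < hfun k g := by
  have hL : 0 ≤ -Real.log g := by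
    have := Real.log_nonpos hg.le hg1
    linarith
  have : (1:ℝ) ≤ ∑ i ∈ Finset.range (k + 1), (-Real.log g) ^ i / (i.factorial : ℝ) := by
    have h0 : ∀ i ∈ Finset.range (k + 1), (0:ℝ) ≤ (-Real.log g) ^ i / (i.factorial : ℝ) :=
      fun i _ => div_nonneg (pow_nonneg hL i) (Nat.cast_nonneg _)
    calc (1:ℝ) = (-Real.log g) ^ 0 / ((0:ℕ).factorial : ℝ) := by norm_num
      _ ≤ _ := Finset.single_le_sum h0 (Finset.mem_range.2 (Nat.succ_pos k))
  simp only [hfun]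
  nlinarith

lemma hfun_hasDerivAt (k : ℕ) {g : ℝ} (hg : 0 < g) :
    HasDerivAt (hfun k) ((-Real.log g) ^ k / (k.factorial : ℝ)) g := by
  have hlog := Real.hasDerivAt_log hg.ne'
  have hS : HasDerivAt (fun g => ∑ i ∈ Finset.range (k + 1),
      (-Real.log g) ^ i / (i.factorial : ℝ))
      (∑ i ∈ Finset.range (k + 1), ((i : ℝ) * (-Real.log g) ^ (i - 1) * (-g⁻¹)) /
        (i.factorial : ℝ)) g := by
    apply HasDerivAt.fun_sum
    intro i _
    exact ((hlog.neg.pow i)).div_const _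
  have hmul : HasDerivAt (fun g => g * ∑ i ∈ Finset.range (k + 1),
      (-Real.log g) ^ i / (i.factorial : ℝ))
      (1 * ∑ i ∈ Finset.range (k + 1), (-Real.log g) ^ i / (i.factorial : ℝ) +
        g * ∑ i ∈ Finset.range (k + 1), ((i : ℝ) * (-Real.log g) ^ (i - 1) * (-g⁻¹)) /
          (i.factorial : ℝ)) g := (hasDerivAt_id g).mul hS
  have heq : hfun k = fun g => g * ∑ i ∈ Finset.range (k + 1),
      (-Real.log g) ^ i / (i.factorial : ℝ) := rfl
  rw [heq]
  convert hmul using 1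
  -- algebraic identity
  have hsum2 : ∑ i ∈ Finset.range (k + 1), ((i : ℝ) * (-Real.log g) ^ (i - 1) * (-g⁻¹)) /
      (i.factorial : ℝ) = -g⁻¹ * ∑ i ∈ Finset.range k, (-Real.log g) ^ i / (i.factorial : ℝ) := by
    rw [Finset.sum_range_succ']
    simp only [Nat.cast_zero, zero_mul, zero_div, add_zero, Finset.mul_sum]
    refine Finset.sum_congr rfl fun i _ => ?_
    have : ((i + 1 : ℕ) : ℝ) ≠ 0 := by positivity
    rw [Nat.factorial_succ]
    push_cast
    field_simp
  rw [hsum2]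
  rw [Finset.sum_range_succ]
  field_simp
  ring

lemma hfun_continuousAt (k : ℕ) {g : ℝ} (hg : 0 < g) : ContinuousAt (hfun k) g := by
  exact (hfun_hasDerivAt k hg).differentiableAt.continuousAt

lemma hfun_strictMonoOn (k : ℕ) : StrictMonoOn (hfun k) (Set.Ioc 0 1) := by
  have hconv : Convex ℝ (Set.Ioc (0:ℝ) 1) := convex_Ioc 0 1
  refine StrictMonoOn.mono ?_ (le_refl _)
  refine strictMonoOn_of_deriv_pos hconv ?_ ?_
  · intro g hg
    exact (hfun_continuousAt k hg.1).continuousWithinAt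
  · intro g hg
    rw [interior_Ioc] at hg
    rw [(hfun_hasDerivAt k hg.1).deriv]
    have hL : 0 < -Real.log g := by
      have := Real.log_neg hg.1 hg.2
      linarith
    positivity

lemma IsCDF.nonneg {G : ℝ → ℝ} (hG : IsCDF G) (t : ℝ) : 0 ≤ G t := by
  refine le_of_tendsto hG.2.2.1 ?_
  filter_upwards [eventually_le_atBot t] with s hs using hG.1 hs

lemma IsCDF.le_one {G : ℝ → ℝ} (hG : IsCDF G) (t : ℝ) : G t ≤ 1 := by
  refine ge_of_tendsto hG.2.2.2 ?_
  filter_upwards [eventually_ge_atTop t] with s hs using hG.1 hs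

lemma contG_of_contH {G : ℝ → ℝ} (k : ℕ) (hG : IsCDF G) (y : ℝ)
    (hy : ContinuousAt (fun z => hfun k (G z)) y) : ContinuousAt G y := by
  set L := sSup (G '' Iio y) with hLdef
  have hne : (G '' Iio y).Nonempty := ⟨G (y - 1), mem_image_of_mem _ (by simp : y - 1 ∈ Iio y)⟩
  have hbdd : BddAbove (G '' Iio y) := ⟨G y, by rintro _ ⟨t, ht, rfl⟩; exact hG.1 ht.le⟩
  have hL_le : L ≤ G y := csSup_le hne (by rintro _ ⟨t, ht, rfl⟩; exact hG.1 ht.le)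
  have hL0 : 0 ≤ L := le_trans (hG.nonneg (y - 1))
    (le_csSup hbdd (mem_image_of_mem _ (by simp : y - 1 ∈ Iio y)))
  have htendsto : Tendsto G (𝓝[<] y) (𝓝 L) := hG.1.tendsto_nhdsLT y
  have Hty : Tendsto (fun z => hfun k (G z)) (𝓝[<] y) (𝓝 (hfun k (G y))) :=
    hy.continuousWithinAt
  have key : L = G y := by
    rcases eq_or_lt_of_le hL0 with hL0' | hLpos
    · -- L = 0 : G vanishes on Iio y
      have hzero : ∀ t ∈ Iio y, G t = 0 := by
        intro t ht
        have h1 : G t ≤ L := le_csSup hbdd (mem_image_of_mem _ ht)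
        have h2 := hG.nonneg t
        linarith [hL0'.symm ▸ h1]
      have hconst : Tendsto (fun z => hfun k (G z)) (𝓝[<] y) (𝓝 0) := by
        refine Tendsto.congr' ?_ tendsto_const_nhds
        filter_upwards [self_mem_nhdsWithin] with t ht
        rw [hzero t ht, hfun_zero]
      have huniq : hfun k (G y) = 0 := tendsto_nhds_unique Hty hconst
      rcases eq_or_lt_of_le (hG.nonneg y) with h | h
      · exact hL0'.symm.trans h
      · exact absurd huniq (hfun_pos k h (hG.le_one y)).ne'
    · -- L > 0
      have hcont : Tendsto (fun z => hfun k (G z)) (𝓝[<] y) (𝓝 (hfun k L)) :=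
        (hfun_continuousAt k hLpos).tendsto.comp htendsto
      have huniq : hfun k L = hfun k (G y) := tendsto_nhds_unique hcont Hty
      by_contra hne'
      have hlt : L < G y := lt_of_le_of_ne hL_le hne'
      have := (hfun_strictMonoOn k) ⟨hLpos, le_trans hL_le (hG.le_one y)⟩
        ⟨lt_of_le_of_lt hL0 hlt, hG.le_one y⟩ hlt
      rw [huniq] at this
      exact lt_irrefl _ this
  have hleft : ContinuousWithinAt G (Iio y) y := by
    rw [ContinuousWithinAt]
    rw [← key]
    exact htendsto
  have := (hleft.union (hG.2.1 y))
  rwa [Iio_union_Ici, continuousWithinAt_univ] at this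

end Aux
section Counting

variable {Ω : Type*} [MeasureSpace Ω] {p : ℕ}
variable (X : ℕ → Ω → (Fin p → ℝ)) (Y : ℕ → Ω → ℝ) (x : Fin p → ℝ)

open Classical in
lemma empMargF_eq (n : ℕ) (ω : Ω) :
    empMargF X n x ω = (((Finset.range n).filter (fun i => X i ω ≤ x)).card : ℝ) / n := by
  rw [empMargF, Finset.sum_boole]

open Classical in
lemma empCondQ_le_iff (k n : ℕ) (hn : 1 ≤ n) {u : ℝ} (hu : 0 ≤ u) (ω : Ω) :
    empCondQ X Y n (1 - (k : ℝ) / ((n : ℝ) * empMargF X n x ω)) x ω ≤ u ↔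
      ((Finset.range n).filter (fun i => X i ω ≤ x ∧ u < Y i ω)).card ≤ k := by
  have hn0 : ((n : ℕ) : ℝ) ≠ 0 := Nat.cast_ne_zero.2 (by omega)
  set T := (Finset.range n).filter (fun i => X i ω ≤ x) with hT
  set M := T.card with hM
  have hmarg : empMargF X n x ω = (M : ℝ) / n := empMargF_eq X x n ω
  have hα : (1 : ℝ) - (k : ℝ) / ((n : ℝ) * empMargF X n x ω) = 1 - (k : ℝ) / (M : ℝ) := by
    rw [hmarg, mul_div_cancel₀ _ hn0]
  set J : ℝ → ℕ := fun y => (T.filter (fun i => Y i ω ≤ y)).card with hJ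
  set Ex : ℝ → ℕ := fun y => (T.filter (fun i => y < Y i ω)).card with hEx
  have hcond : ∀ y : ℝ, empCondF X Y n x y ω = (J y : ℝ) / (M : ℝ) := by
    intro y
    rw [empCondF, empJointF, hmarg, Finset.sum_boole]
    have : (Finset.range n).filter (fun i => X i ω ≤ x ∧ Y i ω ≤ y) =
        T.filter (fun i => Y i ω ≤ y) := by
      rw [hT, Finset.filter_filter]
    rw [this]
    rcases eq_or_ne M 0 with h | h
    · have hJ0 : T.filter (fun i => Y i ω ≤ y) = ∅ := by
        rw [← Finset.card_eq_zero]
        exact Nat.le_antisymm (h ▸ Finset.card_filter_le T _) (Nat.zero_le _)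
      simp [hJ0, h]
    · have hM0 : ((M : ℕ) : ℝ) ≠ 0 := Nat.cast_ne_zero.2 h
      field_simp
      rfl
  have hsplit : ∀ y : ℝ, J y + Ex y = M := by
    intro y
    rw [hJ, hEx, hM]
    have := Finset.card_filter_add_card_filter_not
      (s := T) (p := fun i => Y i ω ≤ y)
    simpa [not_le] using this
  have hExu : ((Finset.range n).filter (fun i => X i ω ≤ x ∧ u < Y i ω)).card = Ex u := by
    simp only [hEx, hT, Finset.filter_filter]
  rw [hExu, empCondQ, hα]
  simp only [hcond]
  rcases Nat.eq_zero_or_pos M with hM0 | hMpos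
  · -- M = 0 : both sides true
    have hExu0 : Ex u = 0 := by
      have := hsplit u
      omega
    simp only [hM0, hExu0]
    constructor
    · intro _; exact Nat.zero_le k
    · intro _
      have hset : {y : ℝ | 0 ≤ y ∧ 1 - (k : ℝ) / ((0:ℕ) : ℝ) ≤ (J y : ℝ) / ((0:ℕ):ℝ)} = ∅ := by
        ext y
        simp
      rw [hset, Real.sInf_empty]
      exact hu
  · -- M ≥ 1
    have hMr : (0 : ℝ) < (M : ℝ) := by exact_mod_cast hMpos
    have hmem : ∀ y : ℝ, (1 - (k : ℝ) / (M : ℝ) ≤ (J y : ℝ) / (M : ℝ)) ↔ Ex y ≤ k := by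
      intro y
      rw [sub_le_iff_le_add, ← add_div, le_div_iff₀ hMr, one_mul]
      have hcast : (J y : ℝ) + (Ex y : ℝ) = (M : ℝ) := by exact_mod_cast hsplit y
      constructor
      · intro h
        have h2 : (Ex y : ℝ) ≤ (k : ℝ) := by linarith
        exact_mod_cast h2
      · intro h
        have h2 : (Ex y : ℝ) ≤ (k : ℝ) := by exact_mod_cast h
        linarith
    have hsetS : {y : ℝ | 0 ≤ y ∧ 1 - (k : ℝ) / (M : ℝ) ≤ (J y : ℝ) / (M : ℝ)} =
        {y : ℝ | 0 ≤ y ∧ Ex y ≤ k} := by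
      ext y
      simp only [mem_setOf_eq, hmem y]
    rw [hsetS]
    have hTne : T.Nonempty := Finset.card_pos.1 hMpos
    set ystar : ℝ := max 0 (T.sup' hTne (fun i => Y i ω)) with hystar
    have hystar_mem : ystar ∈ {y : ℝ | 0 ≤ y ∧ Ex y ≤ k} := by
      constructor
      · exact le_max_left _ _
      · have : T.filter (fun i => ystar < Y i ω) = ∅ := by
          rw [Finset.filter_eq_empty_iff]
          intro i hi
          push_neg
          exact le_trans (Finset.le_sup' (fun i => Y i ω) hi) (le_max_right _ _)
        rw [hEx]
        simp only [this, Finset.card_empty]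
        exact Nat.zero_le k
    have hSne : {y : ℝ | 0 ≤ y ∧ Ex y ≤ k}.Nonempty := ⟨ystar, hystar_mem⟩
    have hSbdd : BddBelow {y : ℝ | 0 ≤ y ∧ Ex y ≤ k} := ⟨0, fun y hy => hy.1⟩
    constructor
    · -- sInf ≤ u → Ex u ≤ k
      intro h
      by_contra hc
      push_neg at hc
      set F := T.filter (fun i => u < Y i ω) with hF
      have hFne : F.Nonempty := by
        apply Finset.card_pos.1
        have h4 : k < Ex u := hc
        have h5 : Ex u = F.card := rfl
        omega
      set m := F.inf' hFne (fun i => Y i ω) with hm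
      have hum : u < m := by
        rw [hm, Finset.lt_inf'_iff]
        intro i hi
        exact (Finset.mem_filter.1 hi).2
      have hSm : ∀ b ∈ {y : ℝ | 0 ≤ y ∧ Ex y ≤ k}, m ≤ b := by
        intro b hb
        by_contra hbm
        push_neg at hbm
        have hsub : F ⊆ T.filter (fun i => b < Y i ω) := by
          intro i hi
          rw [Finset.mem_filter]
          refine ⟨(Finset.mem_filter.1 hi).1, ?_⟩
          exact lt_of_lt_of_le hbm (Finset.inf'_le (fun i => Y i ω) hi)
        have h2 : F.card ≤ (T.filter (fun i => b < Y i ω)).card := Finset.card_le_card hsub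
        have h3 : Ex b = (T.filter (fun i => b < Y i ω)).card := rfl
        have h4 : k < Ex u := hc
        have h5 : Ex u = F.card := rfl
        have h6 : Ex b ≤ k := hb.2
        omega
      have := le_csInf hSne hSm
      linarith
    · -- Ex u ≤ k → sInf ≤ u
      intro h
      exact csInf_le hSbdd ⟨hu, h⟩

end Counting

section Fdh

variable {Ω : Type*} [MeasureSpace Ω] {p : ℕ}
variable (X : ℕ → Ω → (Fin p → ℝ)) (Y : ℕ → Ω → ℝ) (x : Fin p → ℝ)

lemma fdhSet_finite (n : ℕ) (ω : Ω) :
    {y : ℝ | ∃ i < n, X i ω ≤ x ∧ Y i ω = y}.Finite := by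
  apply Set.Finite.subset (Set.Finite.image (fun i => Y i ω) (Set.finite_Iio n))
  rintro y ⟨i, hi, _, rfl⟩
  exact ⟨i, hi, rfl⟩

open Classical in
lemma fdh_le_iff (n : ℕ) {u : ℝ} (hu : 0 ≤ u) (ω : Ω) :
    fdh X Y n x ω ≤ u ↔
      ((Finset.range n).filter (fun i => X i ω ≤ x ∧ u < Y i ω)).card = 0 := by
  rw [fdh, Finset.card_eq_zero, Finset.filter_eq_empty_iff]
  constructor
  · intro h i hi
    push_neg
    intro hXi
    rw [Finset.mem_range] at hi
    have hmem : Y i ω ∈ {y : ℝ | ∃ i < n, X i ω ≤ x ∧ Y i ω = y} := ⟨i, hi, hXi, rfl⟩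
    have := le_csSup (Set.Finite.bddAbove (fdhSet_finite X Y x n ω)) hmem
    linarith
  · intro h
    apply Real.sSup_le _ hu
    rintro y ⟨i, hi, hXi, rfl⟩
    have := h (Finset.mem_range.2 hi)
    push_neg at this
    exact this hXi

lemma fdh_neg_subset (n : ℕ) {u : ℝ} (hu : u < 0) :
    {ω : Ω | fdh X Y n x ω ≤ u} ⊆ ⋃ i ∈ Finset.range n, {ω : Ω | Y i ω < 0} := by
  intro ω hω
  simp only [mem_setOf_eq, fdh] at hω
  have hne : {y : ℝ | ∃ i < n, X i ω ≤ x ∧ Y i ω = y}.Nonempty := by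
    by_contra hc
    rw [Set.not_nonempty_iff_eq_empty] at hc
    rw [hc, Real.sSup_empty] at hω
    linarith
  have hmem := Set.Nonempty.csSup_mem hne (fdhSet_finite X Y x n ω)
  obtain ⟨i, hi, _, hYi⟩ := hmem
  refine Set.mem_biUnion (Finset.mem_range.2 hi) ?_
  simp only [mem_setOf_eq]
  linarith [hYi ▸ hω]

lemma empCondQ_nonneg (n : ℕ) (α : ℝ) (ω : Ω) : 0 ≤ empCondQ X Y n α x ω :=
  Real.sInf_nonneg (fun y hy => hy.1)

end Fdh

section Binomial

variable {Ω : Type*} [MeasureSpace Ω] {p : ℕ}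
variable (X : ℕ → Ω → (Fin p → ℝ)) (Y : ℕ → Ω → ℝ) (x : Fin p → ℝ)

lemma measA (u : ℝ) : MeasurableSet {q : (Fin p → ℝ) × ℝ | q.1 ≤ x ∧ u < q.2} := by
  have h1 : {q : (Fin p → ℝ) × ℝ | q.1 ≤ x ∧ u < q.2} =
      (⋂ i : Fin p, (fun q : (Fin p → ℝ) × ℝ => q.1 i) ⁻¹' Iic (x i)) ∩
        (Prod.snd ⁻¹' Ioi u) := by
    ext q
    simp [Pi.le_def, Set.mem_iInter, forall_and]
  rw [h1]
  exact MeasurableSet.inter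
    (MeasurableSet.iInter fun i =>
      ((measurable_pi_apply i).comp measurable_fst) measurableSet_Iic)
    (measurable_snd measurableSet_Ioi)

open Classical in
lemma meas_count [IsProbabilityMeasure (ℙ : Measure Ω)] (hiid : IID X Y) (n k : ℕ) (u : ℝ) :
    (ℙ {ω : Ω | ((Finset.range n).filter (fun i => X i ω ≤ x ∧ u < Y i ω)).card ≤ k}).toReal =
    ∑ j ∈ Finset.range (k + 1), (n.choose j : ℝ) *
      (ℙ {ω : Ω | X 0 ω ≤ x ∧ u < Y 0 ω}).toReal ^ j *
      (1 - (ℙ {ω : Ω | X 0 ω ≤ x ∧ u < Y 0 ω}).toReal) ^ (n - j) := by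
  set A : Set ((Fin p → ℝ) × ℝ) := {q | q.1 ≤ x ∧ u < q.2} with hAdef
  have hA : MeasurableSet A := measA x u
  set Z : ℕ → Ω → (Fin p → ℝ) × ℝ := fun i ω => (X i ω, Y i ω) with hZdef
  have hZ : ∀ i, Measurable (Z i) := hiid.1
  set pe : ENNReal := ℙ (Z 0 ⁻¹' A) with hpedef
  have hpe_le : pe ≤ 1 := prob_le_one
  have hpe_i : ∀ i, ℙ (Z i ⁻¹' A) = pe := fun i => (hiid.2.2 i).measure_mem_eq hA
  have hpec : ∀ i, ℙ ((Z i ⁻¹' A)ᶜ) = 1 - pe := by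
    intro i
    rw [prob_compl_eq_one_sub ((hZ i) hA), hpe_i]
  -- pattern sets
  set D : Finset ℕ → Set Ω :=
    fun s => {ω | (Finset.range n).filter (fun i => X i ω ≤ x ∧ u < Y i ω) = s} with hDdef
  have hD : ∀ s ∈ (Finset.range n).powerset,
      D s = ⋂ i ∈ Finset.range n, (if i ∈ s then Z i ⁻¹' A else (Z i ⁻¹' A)ᶜ) := by
    intro s hs
    rw [Finset.mem_powerset] at hs
    ext ω
    simp only [hDdef, mem_setOf_eq, mem_iInter]
    constructor
    · intro hfil i hi
      by_cases his : i ∈ s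
      · simp only [his, if_true]
        have := Finset.mem_filter.1 (hfil ▸ his)
        exact this.2
      · simp only [his, if_false]
        intro hmem
        exact his (hfil ▸ Finset.mem_filter.2 ⟨hi, hmem⟩)
    · intro h
      ext i
      rw [Finset.mem_filter]
      constructor
      · rintro ⟨hi, hPi⟩
        have := h i hi
        by_cases his : i ∈ s
        · exact his
        · simp only [his, if_false] at this
          exact absurd hPi this
      · intro his
        refine ⟨hs his, ?_⟩
        have := h _ (hs his)
        simp only [his, if_true] at this; exact this
  have hDmeas : ∀ s ∈ (Finset.range n).powerset, MeasurableSet (D s) := by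
    intro s hs
    rw [hD s hs]
    refine MeasurableSet.biInter (Finset.range n).countable_toSet fun i _ => ?_
    by_cases his : i ∈ s <;> simp only [his, if_true, if_false]
    · exact (hZ i) hA
    · exact ((hZ i) hA).compl
  have hDmeasure : ∀ s ∈ (Finset.range n).powerset,
      ℙ (D s) = pe ^ s.card * (1 - pe) ^ (n - s.card) := by
    intro s hs
    have hs' := Finset.mem_powerset.1 hs
    rw [hD s hs]
    have hIeq : (⋂ i ∈ Finset.range n, (if i ∈ s then Z i ⁻¹' A else (Z i ⁻¹' A)ᶜ)) =
        ⋂ i ∈ Finset.range n, Z i ⁻¹' (if i ∈ s then A else Aᶜ) := by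
      apply Set.iInter₂_congr
      intro i _
      by_cases his : i ∈ s
      · rw [if_pos his, if_pos his]
      · rw [if_neg his, if_neg his, Set.preimage_compl]
    rw [hIeq]
    rw [hiid.2.1.measure_inter_preimage_eq_mul (Finset.range n)
      (fun i _ => by by_cases his : i ∈ s <;> simp only [his, if_true, if_false]
                     exacts [hA, hA.compl])]
    have hprod : ∀ i ∈ Finset.range n,
        ℙ (Z i ⁻¹' (if i ∈ s then A else Aᶜ)) = (if i ∈ s then pe else 1 - pe) := by
      intro i _
      by_cases his : i ∈ s <;> simp only [his, if_true, if_false]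
      · exact hpe_i i
      · rw [Set.preimage_compl]
        exact hpec i
    rw [Finset.prod_congr rfl hprod, Finset.prod_ite, Finset.prod_const, Finset.prod_const,
      Finset.filter_mem_eq_inter, Finset.inter_eq_right.2 hs', Finset.filter_not,
      Finset.filter_mem_eq_inter, Finset.inter_eq_right.2 hs', Finset.card_sdiff_of_subset hs',
      Finset.card_range]
  -- the count event
  have hev : {ω : Ω | ((Finset.range n).filter (fun i => X i ω ≤ x ∧ u < Y i ω)).card ≤ k} =
      ⋃ j ∈ Finset.range (k + 1), ⋃ s ∈ (Finset.range n).powersetCard j, D s := by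
    ext ω
    simp only [mem_setOf_eq, mem_iUnion, exists_prop]
    constructor
    · intro h
      refine ⟨((Finset.range n).filter (fun i => X i ω ≤ x ∧ u < Y i ω)).card,
        Finset.mem_range.2 (by omega), (Finset.range n).filter _, ?_, rfl⟩
      exact Finset.mem_powersetCard.2 ⟨Finset.filter_subset _ _, rfl⟩
    · rintro ⟨j, hj, s, hs, hDs⟩
      have := Finset.mem_powersetCard.1 hs
      have hcard : ((Finset.range n).filter (fun i => X i ω ≤ x ∧ u < Y i ω)).card = j := by
        rw [hDs]; exact this.2
      rw [hcard]
      exact Nat.lt_succ_iff.1 (Finset.mem_range.1 hj)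
  rw [hev]
  have hmeas_inner : ∀ j ∈ Finset.range (k + 1),
      MeasurableSet (⋃ s ∈ (Finset.range n).powersetCard j, D s) := by
    intro j _
    refine MeasurableSet.biUnion ((Finset.range n).powersetCard j).countable_toSet
      fun s hs => hDmeas s ?_
    exact Finset.mem_powerset.2 (Finset.mem_powersetCard.1 hs).1
  have hdisjD : ∀ (t : Finset (Finset ℕ)), (t : Set (Finset ℕ)).PairwiseDisjoint D := by
    intro t s hs s' hs' hne
    refine Set.disjoint_left.2 fun ω hω hω' => hne ?_
    exact (hω.symm.trans hω' : s = s')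
  have hinner : ∀ j ∈ Finset.range (k + 1),
      ℙ (⋃ s ∈ (Finset.range n).powersetCard j, D s) =
        (n.choose j : ENNReal) * (pe ^ j * (1 - pe) ^ (n - j)) := by
    intro j _
    rw [measure_biUnion_finset (hdisjD _)
      (fun s hs => hDmeas s (Finset.mem_powerset.2 (Finset.mem_powersetCard.1 hs).1))]
    have hcongr : ∀ s ∈ (Finset.range n).powersetCard j,
        ℙ (D s) = pe ^ j * (1 - pe) ^ (n - j) := by
      intro s hs
      obtain ⟨hsub, hcard⟩ := Finset.mem_powersetCard.1 hs
      rw [hDmeasure s (Finset.mem_powerset.2 hsub), hcard]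
    rw [Finset.sum_congr rfl hcongr, Finset.sum_const, Finset.card_powersetCard,
      Finset.card_range, nsmul_eq_mul]
  -- disjointness of the j-unions
  have hdisjC : ((Finset.range (k+1) : Finset ℕ) : Set ℕ).PairwiseDisjoint
      (fun j => ⋃ s ∈ (Finset.range n).powersetCard j, D s) := by
    intro j hj j' hj' hne
    refine Set.disjoint_left.2 fun ω hω hω' => hne ?_
    simp only [mem_iUnion, exists_prop] at hω hω'
    obtain ⟨s, hs, hDs⟩ := hω
    obtain ⟨s', hs', hDs'⟩ := hω'
    have h1 := (Finset.mem_powersetCard.1 hs).2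
    have h2 := (Finset.mem_powersetCard.1 hs').2
    have : s = s' := hDs.symm.trans hDs'
    rw [← h1, ← h2, this]
  rw [measure_biUnion_finset hdisjC hmeas_inner]
  rw [ENNReal.toReal_sum (fun j _ => ?_)]
  · refine Finset.sum_congr rfl fun j _ => ?_
    rw [hinner j (by assumption)]
    rw [ENNReal.toReal_mul, ENNReal.toReal_mul, ENNReal.toReal_pow, ENNReal.toReal_pow,
      ENNReal.toReal_natCast, ENNReal.toReal_sub_of_le hpe_le ENNReal.one_ne_top,
      ENNReal.toReal_one]
    have hset0 : {ω : Ω | X 0 ω ≤ x ∧ u < Y 0 ω} = Z 0 ⁻¹' A := rfl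
    rw [hset0, ← hpedef]
    ring
  · rw [hinner j (by assumption)]
    exact ENNReal.mul_ne_top (ENNReal.natCast_ne_top _)
      (ENNReal.mul_ne_top (ENNReal.pow_ne_top (lt_of_le_of_lt hpe_le ENNReal.one_lt_top).ne)
        (ENNReal.pow_ne_top (lt_of_le_of_lt (tsub_le_self) ENNReal.one_lt_top).ne))
end Binomial

section Null

variable {Ω : Type*} [MeasureSpace Ω] {p : ℕ}
variable (X : ℕ → Ω → (Fin p → ℝ)) (Y : ℕ → Ω → ℝ) (x : Fin p → ℝ)

lemma fdh_neg_null (hiid : IID X Y)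
    (hpos : ∀ᵐ ω ∂ℙ, (∀ i, 0 ≤ X 0 ω i) ∧ 0 ≤ Y 0 ω) (n : ℕ) {u : ℝ} (hu : u < 0) :
    ℙ {ω : Ω | fdh X Y n x ω ≤ u} = 0 := by
  have h0 : ℙ {ω : Ω | Y 0 ω < 0} = 0 := by
    have hsub : {ω : Ω | Y 0 ω < 0} ⊆ {ω : Ω | ¬((∀ i, 0 ≤ X 0 ω i) ∧ 0 ≤ Y 0 ω)} :=
      fun ω h hc => absurd hc.2 (not_le.2 h)
    exact measure_mono_null hsub (ae_iff.1 hpos)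
  have hi : ∀ i, ℙ {ω : Ω | Y i ω < 0} = 0 := by
    intro i
    have hset : {ω : Ω | Y i ω < 0} =
        (fun ω => (X i ω, Y i ω)) ⁻¹' {q : (Fin p → ℝ) × ℝ | q.2 < 0} := rfl
    rw [hset, (hiid.2.2 i).measure_mem_eq (s := {q : (Fin p → ℝ) × ℝ | q.2 < 0})
      (measurable_snd measurableSet_Iio)]
    exact h0
  refine measure_mono_null (fdh_neg_subset X Y x n hu) ?_
  refine le_antisymm ?_ zero_le
  calc ℙ (⋃ i ∈ Finset.range n, {ω : Ω | Y i ω < 0})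
      ≤ ∑ i ∈ Finset.range n, ℙ {ω : Ω | Y i ω < 0} := measure_biUnion_finset_le _ _
    _ = 0 := by simp [hi]

end Null

/-- Theorem 2.2(i): if the normalized FDH estimator converges in distribution to `G_x`,
then for any fixed integer `k ≥ 0` the order-`k` quantile-type estimator
`φ̂_{1-k/(n F̂_X(x))}(x)`, normalized in the same way, converges in distribution to
`H_x(y) = G_x(y) ∑_{i=0}^k (-log G_x(y))^i / i!`. -/
theorem statement6
    [IsProbabilityMeasure (ℙ : Measure Ω)]
    (X : ℕ → Ω → (Fin p → ℝ)) (Y : ℕ → Ω → ℝ) (hiid : IID X Y)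
    (hpos : ∀ᵐ ω ∂ℙ, (∀ i, 0 ≤ X 0 ω i) ∧ 0 ≤ Y 0 ω)
    (x : Fin p → ℝ) (hxpos : ∀ i, 0 ≤ x i) (hx : 0 < margF X x)
    (hphi : BddAbove {y : ℝ | 0 ≤ y ∧ condF X Y x y < 1})
    (b : ℕ → ℝ) (hb : ∀ n, 0 < b n)
    (G : ℝ → ℝ) (hG : IsCDF G) (hGnd : NonDegenerate G)
    (hconv : TendstoInDist (fun n ω => (fdh X Y n x ω - phi X Y x) / b n) G)
    (k : ℕ) :
    TendstoInDist
      (fun n ω =>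
        (empCondQ X Y n (1 - (k : ℝ) / ((n : ℝ) * empMargF X n x ω)) x ω - phi X Y x) / b n)
      (fun y => G y * ∑ i ∈ Finset.range (k + 1),
        (-Real.log (G y)) ^ i / (Nat.factorial i : ℝ)) := by
  classical
  intro y hy
  have hy' : ContinuousAt (fun z => hfun k (G z)) y := hy
  have hGy_cont : ContinuousAt G y := contG_of_contH k hG y hy'
  have hGc := hconv y hGy_cont
  set u : ℕ → ℝ := fun n => phi X Y x + b n * y with hudef
  have hev1 : ∀ n : ℕ, {ω : Ω | (fdh X Y n x ω - phi X Y x) / b n ≤ y} =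
      {ω : Ω | fdh X Y n x ω ≤ u n} := by
    intro n
    ext ω
    simp only [mem_setOf_eq, div_le_iff₀ (hb n), hudef]
    constructor <;> intro h <;> nlinarith [hb n]
  set pp : ℕ → ℝ := fun n =>
    if 0 ≤ u n then (ℙ {ω : Ω | X 0 ω ≤ x ∧ u n < Y 0 ω}).toReal else 1 with hppdef
  have hpp0 : ∀ n, 0 ≤ pp n := by
    intro n
    by_cases h : 0 ≤ u n <;> simp only [hppdef, h, if_true, if_false]
    · exact ENNReal.toReal_nonneg
    · exact zero_le_one
  have hpp1 : ∀ n, pp n ≤ 1 := by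
    intro n
    by_cases h : 0 ≤ u n <;> simp only [hppdef, h, if_true, if_false]
    · calc (ℙ {ω : Ω | X 0 ω ≤ x ∧ u n < Y 0 ω}).toReal ≤ (1 : ENNReal).toReal :=
          ENNReal.toReal_mono ENNReal.one_ne_top prob_le_one
        _ = 1 := ENNReal.toReal_one
    · exact le_refl 1
  have hfdh_eq : ∀ n : ℕ, 1 ≤ n →
      (ℙ {ω : Ω | (fdh X Y n x ω - phi X Y x) / b n ≤ y}).toReal = (1 - pp n) ^ n := by
    intro n hn
    rw [hev1 n]
    by_cases h : 0 ≤ u n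
    · have hset : {ω : Ω | fdh X Y n x ω ≤ u n} =
          {ω : Ω | ((Finset.range n).filter (fun i => X i ω ≤ x ∧ u n < Y i ω)).card ≤ 0} := by
        ext ω
        rw [mem_setOf_eq, mem_setOf_eq, fdh_le_iff X Y x n h ω, Nat.le_zero]
      rw [hset, meas_count X Y x hiid n 0 (u n)]
      simp only [zero_add, Finset.sum_range_one, Nat.choose_zero_right, Nat.cast_one, pow_zero,
        Nat.sub_zero, one_mul, mul_one, hppdef, h, if_true]
    · push_neg at h
      rw [fdh_neg_null X Y x hiid hpos n h]
      simp only [ENNReal.toReal_zero, hppdef, not_le.2 h, if_false]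
      rw [sub_self, zero_pow (by omega)]
  have hconv' : Tendsto (fun n => (1 - pp n) ^ n) atTop (𝓝 (G y)) := by
    refine hGc.congr' ?_
    filter_upwards [eventually_ge_atTop 1] with n hn using hfdh_eq n hn
  have hemp_eq : ∀ n : ℕ, k + 1 ≤ n →
      (ℙ {ω : Ω | (empCondQ X Y n (1 - (k : ℝ) / ((n : ℝ) * empMargF X n x ω)) x ω -
          phi X Y x) / b n ≤ y}).toReal =
      ∑ j ∈ Finset.range (k + 1), (n.choose j : ℝ) * pp n ^ j * (1 - pp n) ^ (n - j) := by
    intro n hn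
    have hev2 : {ω : Ω | (empCondQ X Y n (1 - (k : ℝ) / ((n : ℝ) * empMargF X n x ω)) x ω -
        phi X Y x) / b n ≤ y} =
        {ω : Ω | empCondQ X Y n (1 - (k : ℝ) / ((n : ℝ) * empMargF X n x ω)) x ω ≤ u n} := by
      ext ω
      simp only [mem_setOf_eq, div_le_iff₀ (hb n), hudef]
      constructor <;> intro h <;> nlinarith [hb n]
    rw [hev2]
    by_cases h : 0 ≤ u n
    · have hset : {ω : Ω | empCondQ X Y n (1 - (k : ℝ) / ((n : ℝ) * empMargF X n x ω)) x ω ≤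
          u n} =
          {ω : Ω | ((Finset.range n).filter (fun i => X i ω ≤ x ∧ u n < Y i ω)).card ≤ k} := by
        ext ω
        rw [mem_setOf_eq, mem_setOf_eq, empCondQ_le_iff X Y x k n (by omega) h ω]
      rw [hset, meas_count X Y x hiid n k (u n)]
      refine Finset.sum_congr rfl fun j _ => ?_
      simp only [hppdef, h, if_true]
    · push_neg at h
      have hset : {ω : Ω | empCondQ X Y n (1 - (k : ℝ) / ((n : ℝ) * empMargF X n x ω)) x ω ≤
          u n} = ∅ := by
        refine Set.eq_empty_iff_forall_notMem.2 fun ω hω => ?_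
        have := empCondQ_nonneg X Y x n (1 - (k : ℝ) / ((n : ℝ) * empMargF X n x ω)) ω
        rw [mem_setOf_eq] at hω
        exact absurd (le_trans this hω) (not_le.2 h)
      rw [hset]
      simp only [measure_empty, ENNReal.toReal_zero]
      symm
      refine Finset.sum_eq_zero fun j hj => ?_
      have hjk : j ≤ k := Nat.lt_succ_iff.1 (Finset.mem_range.1 hj)
      simp only [hppdef, not_le.2 h, if_false]
      rw [sub_self, zero_pow (by omega)]
      ring
  rcases lt_or_eq_of_le (hG.nonneg y) with hGy | hGy
  · have hmain := binsum_tendsto_pos k hGy hpp0 hpp1 hconv'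
    refine Tendsto.congr' ?_ hmain
    filter_upwards [eventually_ge_atTop (k + 1)] with n hn using (hemp_eq n hn).symm
  · have hconv0 : Tendsto (fun n => (1 - pp n) ^ n) atTop (𝓝 0) := by
      rwa [← hGy] at hconv'
    have hmain := binsum_tendsto_zero k hpp0 hpp1 hconv0
    have htarget : G y * ∑ i ∈ Finset.range (k + 1),
        (-Real.log (G y)) ^ i / (i.factorial : ℝ) = 0 := by
      rw [← hGy]
      ring
    have hmain' : Tendsto (fun n : ℕ => ∑ j ∈ Finset.range (k + 1),
        (n.choose j : ℝ) * pp n ^ j * (1 - pp n) ^ (n - j)) atTop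
        (𝓝 (G y * ∑ i ∈ Finset.range (k + 1),
          (-Real.log (G y)) ^ i / (i.factorial : ℝ))) := by
      rw [htarget]
      exact hmain
    exact Tendsto.congr' (by
      filter_upwards [eventually_ge_atTop (k + 1)] with n hn using (hemp_eq n hn).symm) hmain'

end FrontierEV
end
end

section
/- Suppose the upper bound of the support of Y is finite. If there exist norming constants b_n > 0 and a non-degenerate distribution function G_x such that b_n^{-1}(φ̂_1(x) − φ(x)) converges in distribution to G_x, then b_n^{-1}(φ̂_{α_n}(x) − φ(x)) converges in distribution to G_x for every sequence α_n → 1 satisfying n b_n^{-1}(1 − α_n) → 0. -/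
open MeasureTheory ProbabilityTheory Filter Set Asymptotics Topology

noncomputable section

namespace FrontierEV

variable {Ω : Type*} [MeasureSpace Ω] {p : ℕ}

open Classical in
/-- If some observation lies below `x`, its response is at most the FDH value. -/
lemma le_fdh (X : ℕ → Ω → (Fin p → ℝ)) (Y : ℕ → Ω → ℝ) (x : Fin p → ℝ) {n i : ℕ} {ω : Ω}
    (hi : i < n) (hX : X i ω ≤ x) : Y i ω ≤ fdh X Y n x ω := by
  classical
  have hTset : {y : ℝ | ∃ j < n, X j ω ≤ x ∧ Y j ω = y}
      = ↑(((Finset.range n).filter (fun j => X j ω ≤ x)).image (fun j => Y j ω)) := by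
    ext y
    simp only [Finset.coe_image, Set.mem_image, Finset.mem_coe, Finset.mem_filter,
      Finset.mem_range, Set.mem_setOf_eq]
    constructor
    · rintro ⟨j, hj, hXj, hYj⟩; exact ⟨j, ⟨hj, hXj⟩, hYj⟩
    · rintro ⟨j, ⟨hj, hXj⟩, hYj⟩; exact ⟨j, hj, hXj, hYj⟩
  rw [fdh, hTset]
  refine le_csSup (Finset.bddAbove _) ?_
  simp only [Finset.coe_image, Set.mem_image, Finset.mem_coe, Finset.mem_filter,
    Finset.mem_range]
  exact ⟨i, ⟨hi, hX⟩, rfl⟩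

open Classical in
/-- Key combinatorial fact: as soon as `n (1-α) < 1`, the empirical `α`-quantile
coincides with the FDH estimator (on the event where the responses are nonnegative). -/
lemma aux_eq (X : ℕ → Ω → (Fin p → ℝ)) (Y : ℕ → Ω → ℝ) (x : Fin p → ℝ) (n : ℕ) (α : ℝ)
    (hα0 : 0 < α) (hα1 : α ≤ 1) (hn : (n : ℝ) * (1 - α) < 1) (ω : Ω)
    (hY : ∀ i, i < n → 0 ≤ Y i ω) :
    empCondQ X Y n α x ω = fdh X Y n x ω := by
  classical
  set A : Finset ℕ := (Finset.range n).filter (fun i => X i ω ≤ x) with hA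
  have hmarg : empMargF X n x ω = (A.card : ℝ) / n := by
    rw [empMargF, Finset.sum_boole]
  have hjoint : ∀ y, empJointF X Y n x y ω
      = (((Finset.range n).filter (fun i => X i ω ≤ x ∧ Y i ω ≤ y)).card : ℝ) / n := by
    intro y; rw [empJointF, Finset.sum_boole]
  have hTset : {y : ℝ | ∃ i < n, X i ω ≤ x ∧ Y i ω = y}
      = ↑(A.image (fun i => Y i ω)) := by
    ext y
    simp only [Finset.coe_image, Set.mem_image, Finset.mem_coe, hA, Finset.mem_filter,
      Finset.mem_range, Set.mem_setOf_eq]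
    constructor
    · rintro ⟨i, hi, hXi, hYi⟩; exact ⟨i, ⟨hi, hXi⟩, hYi⟩
    · rintro ⟨i, ⟨hi, hXi⟩, hYi⟩; exact ⟨i, hi, hXi, hYi⟩
  by_cases hAe : A = ∅
  · have hm0 : empMargF X n x ω = 0 := by simp [hmarg, hAe]
    have hset : {y : ℝ | 0 ≤ y ∧ α ≤ empCondF X Y n x y ω} = ∅ := by
      ext y
      simp only [Set.mem_setOf_eq, Set.mem_empty_iff_false, iff_false, not_and, not_le]
      intro _
      rw [empCondF, hm0, div_zero]
      exact hα0
    rw [empCondQ, hset, Real.sInf_empty, fdh, hTset, hAe]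
    simp [Real.sSup_empty]
  · have hAne : A.Nonempty := Finset.nonempty_of_ne_empty hAe
    have hn0 : 0 < n := by
      obtain ⟨i, hi⟩ := hAne
      have := Finset.mem_range.1 (Finset.mem_filter.1 hi).1
      omega
    have hmpos : 0 < (A.card : ℝ) := by
      exact_mod_cast Finset.card_pos.2 hAne
    set T : Finset ℝ := A.image (fun i => Y i ω) with hT
    have hTne : T.Nonempty := hAne.image _
    set f : ℝ := T.max' hTne with hf
    have hfdh : fdh X Y n x ω = f := by
      rw [fdh, hTset]; exact hTne.csSup_eq_max'
    have hf0 : 0 ≤ f := by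
      obtain ⟨i, hi, hYi⟩ := Finset.mem_image.1 (T.max'_mem hTne)
      have hilt := Finset.mem_range.1 (Finset.mem_filter.1 hi).1
      exact le_of_le_of_eq (hY i hilt) hYi
    have hcond : ∀ y : ℝ,
        empCondF X Y n x y ω
          = (((Finset.range n).filter (fun i => X i ω ≤ x ∧ Y i ω ≤ y)).card : ℝ) / A.card := by
      intro y
      have hnne : (n : ℝ) ≠ 0 := Nat.cast_ne_zero.2 hn0.ne'
      rw [empCondF, hjoint, hmarg]
      field_simp
    have hkey : ∀ y : ℝ, (0 ≤ y ∧ α ≤ empCondF X Y n x y ω) ↔ f ≤ y := by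
      intro y
      set B : Finset ℕ := (Finset.range n).filter (fun i => X i ω ≤ x ∧ Y i ω ≤ y) with hB
      have hBA : B ⊆ A := by
        intro i hi
        rw [hB, Finset.mem_filter] at hi
        exact Finset.mem_filter.2 ⟨hi.1, hi.2.1⟩
      constructor
      · rintro ⟨hy0, hαle⟩
        rw [hcond] at hαle
        have hcard : B.card = A.card := by
          by_contra hne
          have hlt : B.card < A.card := lt_of_le_of_ne (Finset.card_le_card hBA) hne
          have hBle : (B.card : ℝ) ≤ (A.card : ℝ) - 1 := by
            have : B.card ≤ A.card - 1 := by omega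
            have h2 : (B.card : ℝ) ≤ ((A.card - 1 : ℕ) : ℝ) := by exact_mod_cast this
            have h3 : ((A.card - 1 : ℕ) : ℝ) = (A.card : ℝ) - 1 := by
              have : 1 ≤ A.card := Finset.card_pos.2 hAne
              push_cast [this]; ring
            linarith
          have hAn : (A.card : ℝ) ≤ n := by
            exact_mod_cast (Finset.card_filter_le _ _).trans (Finset.card_range n).le
          have h4 : α * A.card ≤ (B.card : ℝ) := by
            rw [le_div_iff₀ hmpos] at hαle
            exact hαle
          have h5 : (A.card : ℝ) * (1 - α) ≥ 1 := by nlinarith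
          have h6 : (n : ℝ) * (1 - α) ≥ 1 := by nlinarith [sub_nonneg.2 hα1]
          linarith
        have hBeq : B = A := Finset.eq_of_subset_of_card_le hBA (le_of_eq hcard.symm)
        obtain ⟨i, hi, hYi⟩ := Finset.mem_image.1 (T.max'_mem hTne)
        have hiB : i ∈ B := by rw [hBeq]; exact hi
        have h5 := (Finset.mem_filter.1 hiB).2.2
        exact le_of_eq_of_le hYi.symm h5
      · intro hfy
        refine ⟨hf0.trans hfy, ?_⟩
        have hBeq : B = A := by
          refine Finset.Subset.antisymm hBA (fun i hi => ?_)
          have hi' := Finset.mem_filter.1 hi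
          refine Finset.mem_filter.2 ⟨hi'.1, hi'.2, ?_⟩
          have : Y i ω ∈ T := Finset.mem_image_of_mem _ hi
          exact le_trans (T.le_max' _ this) hfy
        rw [hcond, ← hB, hBeq, div_self (ne_of_gt hmpos)]
        exact hα1
    have hIci : {y : ℝ | 0 ≤ y ∧ α ≤ empCondF X Y n x y ω} = Set.Ici f := by
      ext y; rw [Set.mem_setOf_eq, hkey y]; rfl
    rw [empCondQ, hIci, csInf_Ici, hfdh]

/-- Theorem 2.2(ii): if the support of `Y` is bounded above and the normalized FDH
estimator converges in distribution to `G_x`, then the same holds for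
`φ̂_{α_n}(x)` whenever `α_n → 1` with `n b_n⁻¹ (1 - α_n) → 0`. -/
theorem statement7
    [IsProbabilityMeasure (ℙ : Measure Ω)]
    (X : ℕ → Ω → (Fin p → ℝ)) (Y : ℕ → Ω → ℝ) (hiid : IID X Y)
    (hpos : ∀ᵐ ω ∂ℙ, (∀ i, 0 ≤ X 0 ω i) ∧ 0 ≤ Y 0 ω)
    (x : Fin p → ℝ) (hxpos : ∀ i, 0 ≤ x i) (hx : 0 < margF X x)
    (hphi : BddAbove {y : ℝ | 0 ≤ y ∧ condF X Y x y < 1})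
    (M : ℝ) (hM : ∀ᵐ ω ∂ℙ, Y 0 ω ≤ M)
    (b : ℕ → ℝ) (hb : ∀ n, 0 < b n)
    (G : ℝ → ℝ) (hG : IsCDF G) (hGnd : NonDegenerate G)
    (hconv : TendstoInDist (fun n ω => (fdh X Y n x ω - phi X Y x) / b n) G)
    (α : ℕ → ℝ) (hα : ∀ n, 0 < α n ∧ α n ≤ 1)
    (hα1 : Tendsto α atTop (𝓝 1))
    (hrate : Tendsto (fun n : ℕ => (n : ℝ) * (1 - α n) / b n) atTop (𝓝 0)) :
    TendstoInDist (fun n ω => (empCondQ X Y n (α n) x ω - phi X Y x) / b n) G := by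
  classical
  obtain ⟨hmeas, hind, hid⟩ := hiid
  set φ : ℝ := phi X Y x with hφdef
  have hIic : MeasurableSet (Set.Iic x) := measurableSet_Iic
  have hBmeas : ∀ c : ℝ, MeasurableSet ((Set.Iic x) ×ˢ (Set.Ioi c)) :=
    fun c => hIic.prod measurableSet_Ioi
  have hEe : ∀ (i : ℕ) (c : ℝ), {ω | X i ω ≤ x ∧ c < Y i ω}
      = (fun ω => (X i ω, Y i ω)) ⁻¹' ((Set.Iic x) ×ˢ (Set.Ioi c)) := by
    intro i c; ext ω; simp [Set.mem_prod]
  have hidm : ∀ (i : ℕ) (B : Set ((Fin p → ℝ) × ℝ)), MeasurableSet B →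
      ℙ ((fun ω => (X i ω, Y i ω)) ⁻¹' B) = ℙ ((fun ω => (X 0 ω, Y 0 ω)) ⁻¹' B) :=
    fun i B hB => (hid i).measure_mem_eq hB
  have hmargne : ℙ {ω | X 0 ω ≤ x} ≠ ⊤ := measure_ne_top _ _
  have hjoint_le : ∀ y : ℝ, jointF X Y x y ≤ margF X x := fun y =>
    ENNReal.toReal_mono hmargne (measure_mono (fun ω h => h.1))
  have hcond_le_one : ∀ y : ℝ, condF X Y x y ≤ 1 := by
    intro y; rw [condF, div_le_one hx]; exact hjoint_le y
  have hcond_mono : Monotone (condF X Y x) := by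
    intro y₁ y₂ h
    have hj : jointF X Y x y₁ ≤ jointF X Y x y₂ :=
      ENNReal.toReal_mono (measure_ne_top _ _)
        (measure_mono (fun ω hw => ⟨hw.1, hw.2.trans h⟩))
    rw [condF, condF]
    gcongr
  have hφ0 : 0 ≤ φ := Real.sSup_nonneg (fun y hy => hy.1)
  have ht1 : ∀ t : ℝ, φ < t → condF X Y x t = 1 := by
    intro t ht
    have htS : t ∉ {y : ℝ | 0 ≤ y ∧ condF X Y x y < 1} := by
      intro hmem
      exact absurd (le_csSup hphi hmem) (not_le.2 ht)
    have h0t : 0 ≤ t := hφ0.trans ht.le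
    have h1 : ¬ condF X Y x t < 1 := fun h => htS ⟨h0t, h⟩
    exact le_antisymm (hcond_le_one t) (not_lt.1 h1)
  have hsplit : ∀ c : ℝ, {ω | X 0 ω ≤ x}
      = {ω | X 0 ω ≤ x ∧ Y 0 ω ≤ c} ∪ {ω | X 0 ω ≤ x ∧ c < Y 0 ω} := by
    intro c; ext ω
    constructor
    · intro h
      rcases le_or_gt (Y 0 ω) c with h2 | h2
      · exact Or.inl ⟨h, h2⟩
      · exact Or.inr ⟨h, h2⟩
    · rintro (⟨h, _⟩ | ⟨h, _⟩) <;> exact h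
  have hmeasunion : ∀ c : ℝ, ℙ {ω | X 0 ω ≤ x}
      = ℙ {ω | X 0 ω ≤ x ∧ Y 0 ω ≤ c} + ℙ {ω | X 0 ω ≤ x ∧ c < Y 0 ω} := by
    intro c
    rw [hsplit c]
    refine measure_union ?_ ?_
    · rw [Set.disjoint_left]; rintro ω ⟨_, h1⟩ ⟨_, h2⟩; exact absurd h2 (not_lt.2 h1)
    · rw [hEe 0 c]; exact (hmeas 0) (hBmeas c)
  have hcond_one_iff : ∀ c : ℝ, condF X Y x c = 1 ↔ ℙ {ω | X 0 ω ≤ x ∧ c < Y 0 ω} = 0 := by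
    intro c
    have hJne : ℙ {ω | X 0 ω ≤ x ∧ Y 0 ω ≤ c} ≠ ⊤ := measure_ne_top _ _
    constructor
    · intro h1
      have h2 : jointF X Y x c = margF X x := by
        rw [condF, div_eq_one_iff_eq (ne_of_gt hx)] at h1; exact h1
      have hJM : ℙ {ω | X 0 ω ≤ x ∧ Y 0 ω ≤ c} = ℙ {ω | X 0 ω ≤ x} :=
        (ENNReal.toReal_eq_toReal_iff' (measure_ne_top _ _) hmargne).1 h2
      have h3 := hmeasunion c
      rw [← hJM] at h3
      nth_rewrite 1 [← add_zero (ℙ {ω | X 0 ω ≤ x ∧ Y 0 ω ≤ c})] at h3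
      exact ((ENNReal.add_right_inj hJne).1 h3).symm
    · intro h0
      have h2 := hmeasunion c
      rw [h0, add_zero] at h2
      have h3 : jointF X Y x c = margF X x := by rw [jointF, margF, h2]
      rw [condF, h3, div_self (ne_of_gt hx)]
  have hq0 : ℙ {ω | X 0 ω ≤ x ∧ φ < Y 0 ω} = 0 := by
    have hsub : {ω | X 0 ω ≤ x ∧ φ < Y 0 ω}
        ⊆ ⋃ k : ℕ, {ω | X 0 ω ≤ x ∧ φ + 1/((k:ℝ)+1) < Y 0 ω} := by
      rintro ω ⟨h1, h2⟩
      obtain ⟨k, hk⟩ := exists_nat_one_div_lt (sub_pos.2 h2)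
      exact Set.mem_iUnion.2 ⟨k, h1, by push_cast at hk ⊢; linarith⟩
    refine measure_mono_null hsub (measure_iUnion_null fun k => ?_)
    refine (hcond_one_iff _).1 (ht1 _ ?_)
    have hk1 : (0:ℝ) < 1/((k:ℝ)+1) := by positivity
    linarith
  have hq0i : ∀ i : ℕ, ℙ {ω | X i ω ≤ x ∧ φ < Y i ω} = 0 := by
    intro i
    rw [hEe i φ, hidm i _ (hBmeas φ), ← hEe 0 φ]
    exact hq0
  have hfdhle : ∀ n : ℕ, ∀ᵐ ω ∂ℙ, fdh X Y n x ω ≤ φ := by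
    intro n
    have hae : ∀ᵐ ω ∂ℙ, ∀ i : ℕ, ¬(X i ω ≤ x ∧ φ < Y i ω) := by
      rw [ae_all_iff]
      intro i
      have heq : {ω | ¬¬(X i ω ≤ x ∧ φ < Y i ω)} = {ω | X i ω ≤ x ∧ φ < Y i ω} := by
        ext ω; simp
      rw [ae_iff, heq]; exact hq0i i
    filter_upwards [hae] with ω hω
    refine Real.sSup_le ?_ hφ0
    rintro t ⟨i, hi, hXi, hYi⟩
    by_contra hlt
    exact hω i ⟨hXi, by rw [hYi]; exact not_le.1 hlt⟩
  have hYpos : ∀ᵐ ω ∂ℙ, ∀ i : ℕ, 0 ≤ Y i ω := by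
    rw [ae_all_iff]
    intro i
    have h0 : ℙ {ω | ¬ 0 ≤ Y 0 ω} = 0 := by
      have h1 := hpos.mono (fun ω h => h.2)
      rwa [ae_iff] at h1
    have hEY : ∀ j : ℕ, {ω | ¬ 0 ≤ Y j ω}
        = (fun ω => (X j ω, Y j ω)) ⁻¹' ((Set.univ : Set (Fin p → ℝ)) ×ˢ (Set.Iio 0)) := by
      intro j; ext ω; simp [not_le]
    rw [ae_iff, hEY i, hidm i _ (MeasurableSet.univ.prod measurableSet_Iio), ← hEY 0]
    exact h0
  have hGmono := hG.1
  have hGle1 : ∀ y, G y ≤ 1 := fun y =>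
    ge_of_tendsto hG.2.2.2 (eventually_atTop.2 ⟨y, fun t ht => hGmono ht⟩)
  have hGge0 : ∀ y, 0 ≤ G y := fun y =>
    le_of_tendsto hG.2.2.1 (eventually_atBot.2 ⟨y, fun t ht => hGmono ht⟩)
  have hdense : ∀ a c : ℝ, a < c → ∃ t, a < t ∧ t < c ∧ ContinuousAt G t := by
    intro a c hac
    have hcount : {t : ℝ | ¬ ContinuousAt G t}.Countable := hGmono.countable_not_continuousAt
    have hd : Dense {t : ℝ | ¬ ContinuousAt G t}ᶜ := hcount.dense_compl ℝ
    obtain ⟨t, ht1, ht2⟩ := hd.exists_mem_open isOpen_Ioo (Set.nonempty_Ioo.2 hac)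
    exact ⟨t, ht2.1, ht2.2, not_not.1 ht1⟩
  have hP1 : ∀ (t : ℝ), 0 ≤ t → ∀ n, ℙ {ω | (fdh X Y n x ω - φ) / b n ≤ t} = 1 := by
    intro t ht n
    rw [← measure_univ (μ := (ℙ : Measure Ω))]
    refine measure_congr ?_
    rw [Filter.eventuallyEq_set]
    filter_upwards [hfdhle n] with ω hω
    simp only [Set.mem_setOf_eq, Set.mem_univ, iff_true]
    have hs : fdh X Y n x ω - φ ≤ 0 := sub_nonpos.2 hω
    have hdiv : (fdh X Y n x ω - φ) / b n ≤ 0 := div_nonpos_iff.2 (Or.inr ⟨hs, (hb n).le⟩)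
    exact hdiv.trans ht
  have hGpos1 : ∀ t : ℝ, 0 < t → G t = 1 := by
    intro t ht
    obtain ⟨s, hs0, hst, hscont⟩ := hdense 0 t ht
    have hconv_s := hconv s hscont
    have hPs : ∀ n, (ℙ {ω | (fdh X Y n x ω - φ) / b n ≤ s}).toReal = 1 := by
      intro n; rw [hP1 s hs0.le n]; simp
    have h1 : Tendsto (fun _ : ℕ => (1:ℝ)) atTop (𝓝 (G s)) :=
      hconv_s.congr (fun n => hPs n)
    have hGs : G s = 1 := tendsto_nhds_unique h1 tendsto_const_nhds
    exact le_antisymm (hGle1 t) (hGs ▸ hGmono hst.le)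
  have hG01 : G 0 = 1 := by
    have hc : ContinuousWithinAt G (Set.Ici 0) 0 := hG.2.1 0
    have hc' : Tendsto G (nhdsWithin 0 (Set.Ioi 0)) (𝓝 (G 0)) :=
      hc.mono Set.Ioi_subset_Ici_self
    have h1 : Tendsto G (nhdsWithin 0 (Set.Ioi 0)) (𝓝 1) := by
      refine Tendsto.congr' ?_ tendsto_const_nhds
      filter_upwards [self_mem_nhdsWithin] with t ht
      exact (hGpos1 t ht).symm
    exact tendsto_nhds_unique hc' h1
  obtain ⟨y₀, hy₀0, hy₀1⟩ := hGnd
  have hy₀neg : y₀ < 0 := by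
    by_contra h
    push_neg at h
    have h1 : G y₀ = 1 := le_antisymm (hGle1 y₀) (hG01 ▸ hGmono h)
    exact absurd h1 (ne_of_lt hy₀1)
  obtain ⟨y₁, hy₁a, hy₁b, hy₁cont⟩ := hdense y₀ 0 hy₀neg
  have hy₁pos : 0 < G y₁ := lt_of_lt_of_le hy₀0 (hGmono hy₁a.le)
  have hSne : {y : ℝ | 0 ≤ y ∧ condF X Y x y < 1}.Nonempty := by
    by_contra hS
    rw [Set.not_nonempty_iff_eq_empty] at hS
    have hφe : φ = 0 := by rw [hφdef, phi, hS, Real.sSup_empty]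
    have hc0 : condF X Y x 0 = 1 := by
      have h1 : ¬ condF X Y x 0 < 1 := by
        intro h
        have hmem : (0:ℝ) ∈ {y : ℝ | 0 ≤ y ∧ condF X Y x y < 1} := ⟨le_rfl, h⟩
        rw [hS] at hmem
        exact hmem
      exact le_antisymm (hcond_le_one 0) (not_lt.1 h1)
    have hq00 : ℙ {ω | X 0 ω ≤ x ∧ (0:ℝ) < Y 0 ω} = 0 := (hcond_one_iff 0).1 hc0
    have hq0i' : ∀ i, ℙ {ω | X i ω ≤ x ∧ (0:ℝ) < Y i ω} = 0 := by
      intro i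
      rw [hEe i 0, hidm i _ (hBmeas 0), ← hEe 0 0]
      exact hq00
    have hfdh0 : ∀ n, ∀ᵐ ω ∂ℙ, fdh X Y n x ω = 0 := by
      intro n
      have hae : ∀ᵐ ω ∂ℙ, ∀ i : ℕ, ¬(X i ω ≤ x ∧ (0:ℝ) < Y i ω) := by
        rw [ae_all_iff]; intro i
        have heq : {ω | ¬¬(X i ω ≤ x ∧ (0:ℝ) < Y i ω)} = {ω | X i ω ≤ x ∧ (0:ℝ) < Y i ω} := by
          ext ω; simp
        rw [ae_iff, heq]; exact hq0i' i
      filter_upwards [hae, hYpos] with ω hω hωY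
      refine le_antisymm ?_ ?_
      · refine Real.sSup_le ?_ le_rfl
        rintro t ⟨i, hi, hXi, hYi⟩
        by_contra hlt
        exact hω i ⟨hXi, by rw [hYi]; exact not_le.1 hlt⟩
      · refine Real.sSup_nonneg ?_
        rintro t ⟨i, hi, hXi, hYi⟩
        rw [← hYi]; exact hωY i
    have hP0 : ∀ n, ℙ {ω | (fdh X Y n x ω - φ) / b n ≤ y₁} = 0 := by
      intro n
      have he : {ω | (fdh X Y n x ω - φ) / b n ≤ y₁} =ᵐ[ℙ] (∅ : Set Ω) := by
        rw [Filter.eventuallyEq_set]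
        filter_upwards [hfdh0 n] with ω hω
        simp only [Set.mem_setOf_eq, Set.mem_empty_iff_false, iff_false, not_le]
        rw [hω, hφe, sub_zero, zero_div]
        exact hy₁b
      rw [measure_congr he, measure_empty]
    have h1 := hconv y₁ hy₁cont
    have h2 : Tendsto (fun _ : ℕ => (0:ℝ)) atTop (𝓝 (G y₁)) :=
      h1.congr (fun n => by rw [hP0 n]; simp)
    have h3 : G y₁ = 0 := tendsto_nhds_unique h2 tendsto_const_nhds
    exact hy₁pos.ne' h3
  have hq : ∀ c : ℝ, c < φ → 0 < ℙ {ω | X 0 ω ≤ x ∧ c < Y 0 ω} := by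
    intro c hc
    rcases eq_or_lt_of_le (zero_le : (0:ENNReal) ≤ ℙ {ω | X 0 ω ≤ x ∧ c < Y 0 ω}) with h0 | h0
    · exfalso
      have hc1 : condF X Y x c = 1 := (hcond_one_iff c).2 h0.symm
      have hφc : φ ≤ c := by
        refine csSup_le hSne ?_
        rintro t ⟨ht0, htlt⟩
        by_contra hh
        push_neg at hh
        have h2 := hcond_mono hh.le
        rw [hc1] at h2
        exact absurd (lt_of_le_of_lt h2 htlt) (lt_irrefl 1)
      exact absurd hc (not_lt.2 hφc)
    · exact h0
  have hb0 : Tendsto b atTop (𝓝 0) := by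
    rw [tendsto_order]
    constructor
    · intro a ha; exact Eventually.of_forall (fun n => lt_trans ha (hb n))
    · intro δ hδ
      by_contra hcon
      rw [Filter.not_eventually] at hcon
      set c : ℝ := φ + δ * y₁ with hcdef
      have hcφ : c < φ := by
        have h1 : δ * y₁ < 0 := mul_neg_of_pos_of_neg hδ hy₁b
        rw [hcdef]; linarith
      set q : ENNReal := ℙ {ω | X 0 ω ≤ x ∧ c < Y 0 ω} with hqdef
      have hqpos : 0 < q := hq c hcφ
      have hqle1 : q ≤ 1 := prob_le_one
      set r : ℝ := ((1:ENNReal) - q).toReal with hrdef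
      have hrsub : r = 1 - q.toReal := by
        rw [hrdef, ENNReal.toReal_sub_of_le hqle1 ENNReal.one_ne_top, ENNReal.toReal_one]
      have hq' : 0 < q.toReal := ENNReal.toReal_pos hqpos.ne' (measure_ne_top _ _)
      have hr1 : r < 1 := by rw [hrsub]; linarith
      have hr0 : 0 ≤ r := ENNReal.toReal_nonneg
      have hbound : ∀ n : ℕ, δ ≤ b n →
          (ℙ {ω | (fdh X Y n x ω - φ) / b n ≤ y₁}).toReal ≤ r ^ n := by
        intro n hδn
        have hsub : {ω | (fdh X Y n x ω - φ) / b n ≤ y₁}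
            ⊆ ⋂ i ∈ Finset.range n,
              ((fun ω => (X i ω, Y i ω)) ⁻¹' ((Set.Iic x) ×ˢ (Set.Ioi c)))ᶜ := by
          intro ω hω
          simp only [Set.mem_setOf_eq] at hω
          have hfc : fdh X Y n x ω ≤ c := by
            have h1 : fdh X Y n x ω - φ ≤ y₁ * b n := (div_le_iff₀ (hb n)).1 hω
            have h2 : b n * y₁ ≤ δ * y₁ := mul_le_mul_of_nonpos_right hδn hy₁b.le
            have h3 : y₁ * b n = b n * y₁ := mul_comm _ _
            rw [hcdef]; linarith
          simp only [Set.mem_iInter, Set.mem_compl_iff, Set.mem_preimage, Set.mem_prod,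
            Set.mem_Iic, Set.mem_Ioi, Finset.mem_range, not_and, not_lt]
          intro i hi hXi
          exact (le_fdh X Y x hi hXi).trans hfc
        have hprod : ℙ (⋂ i ∈ Finset.range n,
              ((fun ω => (X i ω, Y i ω)) ⁻¹' ((Set.Iic x) ×ˢ (Set.Ioi c)))ᶜ)
            = ((1:ENNReal) - q) ^ n := by
          simp only [← Set.preimage_compl]
          rw [hind.meas_biInter
            (fun i _ => ⟨((Set.Iic x) ×ˢ (Set.Ioi c))ᶜ, (hBmeas c).compl, rfl⟩)]
          have heach : ∀ i ∈ Finset.range n,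
              ℙ ((fun ω => (X i ω, Y i ω)) ⁻¹' (((Set.Iic x) ×ˢ (Set.Ioi c))ᶜ))
                = (1:ENNReal) - q := by
            intro i _
            have hZ : ℙ ((fun ω => (X i ω, Y i ω)) ⁻¹' ((Set.Iic x) ×ˢ (Set.Ioi c))) = q := by
              rw [hidm i _ (hBmeas c), hqdef, hEe 0 c]
            rw [Set.preimage_compl,
              measure_compl ((hmeas i) (hBmeas c)) (measure_ne_top _ _), measure_univ, hZ]
          rw [Finset.prod_congr rfl heach, Finset.prod_const, Finset.card_range]
        have hne : ((1:ENNReal) - q) ^ n ≠ ⊤ :=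
          ENNReal.pow_ne_top (tsub_le_self.trans_lt ENNReal.one_lt_top).ne
        calc (ℙ {ω | (fdh X Y n x ω - φ) / b n ≤ y₁}).toReal
            ≤ (((1:ENNReal) - q) ^ n).toReal := by
              refine ENNReal.toReal_mono hne ?_
              rw [← hprod]; exact measure_mono hsub
          _ = r ^ n := by rw [ENNReal.toReal_pow]
      have hGy₁ := hconv y₁ hy₁cont
      have hrpow : Tendsto (fun n : ℕ => r ^ n) atTop (𝓝 0) :=
        tendsto_pow_atTop_nhds_zero_of_lt_one hr0 hr1
      have hev : ∀ᶠ n in atTop,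
          r ^ n < (ℙ {ω | (fdh X Y n x ω - φ) / b n ≤ y₁}).toReal := by
        have hsub2 := hGy₁.sub hrpow
        rw [sub_zero] at hsub2
        have h3 := (tendsto_order.1 hsub2).1 0 hy₁pos
        filter_upwards [h3] with n hn
        linarith
      obtain ⟨n, hn1, hn2⟩ := (hcon.and_eventually hev).exists
      exact absurd (hbound n (not_lt.1 hn1)) (not_le.2 hn2)
  have hna : Tendsto (fun n : ℕ => (n:ℝ) * (1 - α n)) atTop (𝓝 0) := by
    have h1 := hrate.mul hb0
    rw [mul_zero] at h1
    refine h1.congr (fun n => ?_)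
    exact div_mul_cancel₀ _ (hb n).ne'
  have hev1 : ∀ᶠ n : ℕ in atTop, (n:ℝ) * (1 - α n) < 1 :=
    (tendsto_order.1 hna).2 1 one_pos
  intro y hy
  refine Tendsto.congr' ?_ (hconv y hy)
  filter_upwards [hev1] with n hn
  congr 1
  refine measure_congr ?_
  rw [Filter.eventuallyEq_set]
  filter_upwards [hYpos] with ω hω
  show ((fdh X Y n x ω - φ) / b n ≤ y) ↔ ((empCondQ X Y n (α n) x ω - φ) / b n ≤ y)
  rw [aux_eq X Y x n (α n) (hα n).1 (hα n).2 hn ω (fun i _ => hω i)]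


end FrontierEV
end
end
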